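/- arXiv:1803.06523 — 5 statements merged into one kernel-verified Lean document; each statement's English description precedes it below -/
import Mathlib

section
/- Let h : ℝ^m → ℝ be convex and L-Lipschitz, and let c : ℝ^d → ℝ^m be a C¹-smooth map whose derivative (Jacobian) is β-Lipschitz continuous in the operator norm. Then the composite function φ(x) = h(c(x)) is Lβ-weakly convex, i.e., x ↦ h(c(x)) + (Lβ/2)‖x‖² is convex. -/
open intervalIntegral

lemma taylor_half {E : Type*} [NormedAddCommGroup E] [NormedSpace ℝ E]
    {F : Type*} [NormedAddCommGroup F] [NormedSpace ℝ F] [CompleteSpace F]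
    (c : E → F) (hc : ContDiff ℝ 1 c) (β : ℝ) (hβ : 0 ≤ β)
    (hJ : ∀ x y : E, ‖fderiv ℝ c x - fderiv ℝ c y‖ ≤ β * ‖x - y‖)
    (z x : E) :
    ‖c x - c z - fderiv ℝ c z (x - z)‖ ≤ β / 2 * ‖x - z‖ ^ 2 := by
  set v := x - z with hv
  have hdiff : ∀ u : E, HasFDerivAt c (fderiv ℝ c u) u := fun u =>
    (hc.differentiable one_ne_zero u).hasFDerivAt
  set g : ℝ → F := fun s => c (z + s • v) - s • (fderiv ℝ c z v) with hg
  have hg' : ∀ s : ℝ, HasDerivAt g ((fderiv ℝ c (z + s • v) - fderiv ℝ c z) v) s := by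
    intro s
    have hline : HasDerivAt (fun s : ℝ => z + s • v) v s := by
      simpa using ((hasDerivAt_id s).smul_const v).const_add z
    have h1 : HasDerivAt (fun s : ℝ => c (z + s • v)) (fderiv ℝ c (z + s • v) v) s :=
      (hdiff (z + s • v)).comp_hasDerivAt s hline
    have h2 : HasDerivAt (fun s : ℝ => s • (fderiv ℝ c z v)) (fderiv ℝ c z v) s := by
      simpa using (hasDerivAt_id s).smul_const (fderiv ℝ c z v)
    rw [ContinuousLinearMap.sub_apply]; exact h1.sub h2
  have hcont : Continuous fun s : ℝ => (fderiv ℝ c (z + s • v) - fderiv ℝ c z) v := by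
    have hfd : Continuous (fderiv ℝ c) := hc.continuous_fderiv one_ne_zero
    have : Continuous fun s : ℝ => fderiv ℝ c (z + s • v) - fderiv ℝ c z :=
      (hfd.comp (by continuity)).sub continuous_const
    exact (ContinuousLinearMap.apply ℝ F v).continuous.comp this
  have hftc : g 1 - g 0 = ∫ s in (0:ℝ)..1, (fderiv ℝ c (z + s • v) - fderiv ℝ c z) v :=
    (integral_eq_sub_of_hasDerivAt (fun s _ => hg' s)
      (hcont.intervalIntegrable 0 1)).symm
  have hval : c x - c z - fderiv ℝ c z v = g 1 - g 0 := by
    simp only [hg, hv, one_smul, zero_smul, add_sub_cancel]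
    abel_nf
  rw [hval, hftc]
  have hbound : ∀ s ∈ Set.Icc (0:ℝ) 1,
      ‖(fderiv ℝ c (z + s • v) - fderiv ℝ c z) v‖ ≤ β * ‖v‖ ^ 2 * s := by
    intro s hs
    calc ‖(fderiv ℝ c (z + s • v) - fderiv ℝ c z) v‖
        ≤ ‖fderiv ℝ c (z + s • v) - fderiv ℝ c z‖ * ‖v‖ :=
          (fderiv ℝ c (z + s • v) - fderiv ℝ c z).le_opNorm v
      _ ≤ (β * ‖(z + s • v) - z‖) * ‖v‖ := by
          gcongr; exact hJ _ _
      _ = β * ‖v‖ ^ 2 * s := by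
          rw [add_sub_cancel_left, norm_smul, Real.norm_eq_abs, abs_of_nonneg hs.1]; ring
  calc ‖∫ s in (0:ℝ)..1, (fderiv ℝ c (z + s • v) - fderiv ℝ c z) v‖
      ≤ |∫ s in (0:ℝ)..1, β * ‖v‖ ^ 2 * s| := by
        have hint : IntervalIntegrable (fun s : ℝ => β * ‖v‖ ^ 2 * s)
            MeasureTheory.volume 0 1 :=
          (Continuous.intervalIntegrable (by continuity) 0 1)
        have hae : ∀ᵐ s ∂MeasureTheory.volume.restrict (Set.uIoc (0:ℝ) 1),
            ‖(fderiv ℝ c (z + s • v) - fderiv ℝ c z) v‖ ≤ β * ‖v‖ ^ 2 * s := by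
          filter_upwards [MeasureTheory.ae_restrict_mem measurableSet_uIoc] with s hs
          have hs' : s ∈ Set.Ioc (0:ℝ) 1 := by rwa [Set.uIoc_of_le (by norm_num)] at hs
          exact hbound s ⟨hs'.1.le, hs'.2⟩
        exact norm_integral_le_abs_of_norm_le hae hint
    _ = β / 2 * ‖v‖ ^ 2 := by
        rw [integral_const_mul, integral_id, abs_of_nonneg (by positivity)]; ring

open RealInnerProductSpace

/-- If `h : ℝ^m → ℝ` is convex and `L`-Lipschitz and `c : ℝ^d → ℝ^m` is `C¹`-smooth with
`β`-Lipschitz Jacobian (in the operator norm), then the composite `φ(x) = h(c(x))` is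
`Lβ`-weakly convex: `x ↦ h(c(x)) + (Lβ/2)‖x‖²` is convex. -/
theorem composite_weakly_convex
    {E : Type*} [NormedAddCommGroup E] [InnerProductSpace ℝ E] [FiniteDimensional ℝ E]
    {F : Type*} [NormedAddCommGroup F] [InnerProductSpace ℝ F] [FiniteDimensional ℝ F]
    (h : F → ℝ) (L : ℝ) (hL : 0 ≤ L)
    (hconv : ConvexOn ℝ Set.univ h)
    (hlip : ∀ u v : F, |h u - h v| ≤ L * ‖u - v‖)
    (c : E → F) (hc : ContDiff ℝ 1 c)
    (β : ℝ) (hβ : 0 ≤ β)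
    (hJ : ∀ x y : E, ‖fderiv ℝ c x - fderiv ℝ c y‖ ≤ β * ‖x - y‖) :
    ConvexOn ℝ Set.univ (fun x => h (c x) + L * β / 2 * ‖x‖ ^ 2) := by
  refine ⟨convex_univ, ?_⟩
  intro x _ y _ a b ha hb hab
  simp only [smul_eq_mul]
  set z := a • x + b • y with hz
  set D := fderiv ℝ c z with hD
  have hb' : b = 1 - a := by linarith
  have tx := taylor_half c hc β hβ hJ z x
  have ty := taylor_half c hc β hβ hJ z y
  have hxz : x - z = b • (x - y) := by rw [hz, hb']; module
  have hyz : y - z = (-a) • (x - y) := by rw [hz, hb']; module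
  have hnxz : ‖x - z‖ = b * ‖x - y‖ := by
    rw [hxz, norm_smul, Real.norm_eq_abs, abs_of_nonneg hb]
  have hnyz : ‖y - z‖ = a * ‖x - y‖ := by
    rw [hyz, norm_smul, Real.norm_eq_abs, abs_neg, abs_of_nonneg ha]
  have h0 : a • (x - z) + b • (y - z) = 0 := by rw [hz, hb']; module
  have hD0 : a • D (x - z) + b • D (y - z) = 0 := by
    have := congrArg D h0
    simpa [map_add, map_smul] using this
  have hdec : a • c x + b • c y - c z
      = a • (c x - c z - D (x - z)) + b • (c y - c z - D (y - z)) := by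
    have e : a • (c x - c z - D (x - z)) + b • (c y - c z - D (y - z))
        = (a • c x + b • c y) - (a + b) • c z - (a • D (x - z) + b • D (y - z)) := by
      module
    rw [e, hD0, hab, one_smul, sub_zero]
  have h1 : ‖a • c x + b • c y - c z‖ ≤ β / 2 * (a * b) * ‖x - y‖ ^ 2 := by
    rw [hdec]
    calc ‖a • (c x - c z - D (x - z)) + b • (c y - c z - D (y - z))‖
        ≤ a * ‖c x - c z - D (x - z)‖ + b * ‖c y - c z - D (y - z)‖ := by
          refine (norm_add_le _ _).trans ?_
          rw [norm_smul, norm_smul, Real.norm_eq_abs, Real.norm_eq_abs,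
            abs_of_nonneg ha, abs_of_nonneg hb]
      _ ≤ a * (β / 2 * ‖x - z‖ ^ 2) + b * (β / 2 * ‖y - z‖ ^ 2) := by gcongr
      _ = β / 2 * (a * b) * ‖x - y‖ ^ 2 := by
          rw [hnxz, hnyz, hb']; ring
  have hlipz : h (c z) ≤ h (a • c x + b • c y) + L * ‖a • c x + b • c y - c z‖ := by
    have h2 := hlip (c z) (a • c x + b • c y)
    have h3 := abs_le.1 h2
    rw [norm_sub_rev] at h3
    linarith [h3.2]
  have hconv' : h (a • c x + b • c y) ≤ a * h (c x) + b * h (c y) :=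
    hconv.2 (Set.mem_univ _) (Set.mem_univ _) ha hb hab
  have hfinal : h (c z) ≤ a * h (c x) + b * h (c y) + L * (β / 2 * (a * b) * ‖x - y‖ ^ 2) := by
    have h4 : L * ‖a • c x + b • c y - c z‖ ≤ L * (β / 2 * (a * b) * ‖x - y‖ ^ 2) :=
      mul_le_mul_of_nonneg_left h1 hL
    linarith
  have hnorm : a * ‖x‖ ^ 2 + b * ‖y‖ ^ 2 - ‖z‖ ^ 2 = a * b * ‖x - y‖ ^ 2 := by
    have e1 : ‖z‖ ^ 2 = ⟪z, z⟫ := (real_inner_self_eq_norm_sq z).symm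
    have e2 : ‖x - y‖ ^ 2 = ⟪x - y, x - y⟫ := (real_inner_self_eq_norm_sq _).symm
    have e3 : ‖x‖ ^ 2 = ⟪x, x⟫ := (real_inner_self_eq_norm_sq x).symm
    have e4 : ‖y‖ ^ 2 = ⟪y, y⟫ := (real_inner_self_eq_norm_sq y).symm
    rw [e1, e2, e3, e4, hz, hb']
    simp only [inner_add_left, inner_add_right, inner_sub_left, inner_sub_right,
      inner_smul_left, inner_smul_right, RCLike.conj_to_real]
    rw [real_inner_comm y x]
    ring
  calc h (c z) + L * β / 2 * ‖z‖ ^ 2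
      ≤ (a * h (c x) + b * h (c y) + L * (β / 2 * (a * b) * ‖x - y‖ ^ 2))
        + L * β / 2 * ‖z‖ ^ 2 := by linarith
    _ = a * (h (c x) + L * β / 2 * ‖x‖ ^ 2) + b * (h (c y) + L * β / 2 * ‖y‖ ^ 2) := by
        linear_combination (-(L * β / 2)) * hnorm
end

section
/- Let f : ℝ^d → ℝ be ρ-weakly convex, let X ⊆ ℝ^d be a nonempty closed convex set, and set φ = f + δ_X (the indicator of X added to f). Let (Ω, F, P) be a probability space and G : ℝ^d × Ω → ℝ^d a measurable map such that for every x ∈ X the vector ∫_Ω G(x,ξ) dP(ξ) is a Fréchet subgradient of f at x and ∫_Ω ‖G(x,ξ)‖² dP(ξ) ≤ L². Fix x ∈ X, a real ρ̄ > ρ, a stepsize α > 0, and let x̂ = prox_{φ/ρ̄}(x). Then the single projected stochastic subgradient step x⁺(ξ) = proj_X(x − α G(x,ξ)) satisfies ∫_Ω φ_{1/ρ̄}(x⁺(ξ)) dP(ξ) ≤ φ_{1/ρ̄}(x) − α(ρ̄ − ρ)ρ̄ ‖x − x̂‖² + α²ρ̄L²/2. -/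
open MeasureTheory RealInnerProductSpace

/-- `v` is a Fréchet subgradient of the real-valued function `f` at `x`:
`f(y) ≥ f(x) + ⟨v, y − x⟩ + o(‖y − x‖)` as `y → x`. -/
def IsFSubgradR {E : Type*} [NormedAddCommGroup E] [InnerProductSpace ℝ E]
    (f : E → ℝ) (x v : E) : Prop :=
  ∀ ε : ℝ, 0 < ε → ∃ δ : ℝ, 0 < δ ∧ ∀ y : E, ‖y - x‖ < δ →
    f x + ⟪v, y - x⟫ - ε * ‖y - x‖ ≤ f y

section Helpers
variable {E : Type*} [NormedAddCommGroup E] [InnerProductSpace ℝ E]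

/-- A Fréchet subgradient of a `ρ`-weakly convex function gives a global lower bound. -/
lemma fsubgrad_global (f : E → ℝ) (ρ : ℝ) (hρ : 0 ≤ ρ)
    (hwc : ConvexOn ℝ Set.univ fun z => f z + ρ / 2 * ‖z‖ ^ 2)
    (x v : E) (hv : IsFSubgradR f x v) (y : E) :
    f x + ⟪v, y - x⟫ - ρ / 2 * ‖y - x‖ ^ 2 ≤ f y := by
  rcases eq_or_ne y x with rfl | hyx
  · simp
  have hN : 0 < ‖y - x‖ := by rwa [norm_pos_iff, sub_ne_zero]
  refine le_of_forall_sub_le fun ε hε => ?_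
  obtain ⟨δ, hδ, hsub⟩ := hv (ε / ‖y - x‖) (by positivity)
  set t : ℝ := min 1 (δ / (2 * ‖y - x‖)) with htdef
  have ht0 : 0 < t := lt_min one_pos (by positivity)
  have ht1 : t ≤ 1 := min_le_left _ _
  have htδ : t * ‖y - x‖ < δ := by
    have h2 : t ≤ δ / (2 * ‖y - x‖) := min_le_right _ _
    have h3 := mul_le_mul_of_nonneg_right h2 hN.le
    have heq : δ / (2 * ‖y - x‖) * ‖y - x‖ = δ / 2 := by field_simp
    rw [heq] at h3
    linarith
  set z : E := x + t • (y - x) with hzdef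
  have hz : (1 - t) • x + t • y = z := by
    rw [hzdef, sub_smul, one_smul, smul_sub]; abel
  have h1 : f x + t * ⟪v, y - x⟫ - (ε / ‖y - x‖) * (t * ‖y - x‖) ≤ f z := by
    have := hsub z (by
      show ‖x + t • (y - x) - x‖ < δ
      rw [add_sub_cancel_left, norm_smul, Real.norm_eq_abs, abs_of_pos ht0]
      exact htδ)
    rwa [show z - x = t • (y - x) by rw [hzdef]; abel, real_inner_smul_right, norm_smul,
      Real.norm_eq_abs, abs_of_pos ht0] at this
  have h2 : f z + ρ / 2 * ‖z‖ ^ 2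
      ≤ (1 - t) * (f x + ρ / 2 * ‖x‖ ^ 2) + t * (f y + ρ / 2 * ‖y‖ ^ 2) := by
    have := hwc.2 (Set.mem_univ x) (Set.mem_univ y)
      (show (0:ℝ) ≤ 1 - t by linarith) ht0.le (show (1 - t) + t = 1 by ring)
    rw [hz] at this
    simpa using this
  have hz2 : ‖z‖ ^ 2 = ‖x‖ ^ 2 + 2 * (t * ⟪x, y - x⟫) + t ^ 2 * ‖y - x‖ ^ 2 := by
    rw [hzdef, norm_add_sq_real, real_inner_smul_right, norm_smul, Real.norm_eq_abs,
      mul_pow, sq_abs]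
  have hix : ⟪x, y - x⟫ = ⟪x, y⟫ - ‖x‖ ^ 2 := by
    rw [inner_sub_right, real_inner_self_eq_norm_sq]
  have hN2 : ‖y - x‖ ^ 2 = ‖y‖ ^ 2 - 2 * ⟪x, y⟫ + ‖x‖ ^ 2 := by
    rw [norm_sub_sq_real, real_inner_comm]
  have hεt : (ε / ‖y - x‖) * (t * ‖y - x‖) = t * ε := by
    field_simp
  rw [hεt] at h1
  have hz2' : ‖z‖ ^ 2 = ‖x‖ ^ 2 + 2 * t * ⟪x, y⟫ - 2 * t * ‖x‖ ^ 2 + t ^ 2 * ‖y - x‖ ^ 2 := by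
    rw [hz2, hix]; ring
  have h2' : f z + ρ / 2 * (‖x‖ ^ 2 + 2 * t * ⟪x, y⟫ - 2 * t * ‖x‖ ^ 2 + t ^ 2 * ‖y - x‖ ^ 2)
      ≤ (1 - t) * (f x + ρ / 2 * ‖x‖ ^ 2) + t * (f y + ρ / 2 * ‖y‖ ^ 2) := by
    rw [← hz2']; exact h2
  have hfact : 0 ≤ ρ * (t ^ 2 * ‖y - x‖ ^ 2) :=
    mul_nonneg hρ (mul_nonneg (sq_nonneg t) (sq_nonneg _))
  have key : t * (⟪v, y - x⟫ - ε + ρ * ⟪x, y⟫ - ρ * ‖x‖ ^ 2)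
      ≤ t * (f y - f x + ρ / 2 * ‖y‖ ^ 2 - ρ / 2 * ‖x‖ ^ 2) := by
    nlinarith [h1, h2', hfact]
  have key2 := le_of_mul_le_mul_left key ht0
  have hN2' : ρ / 2 * ‖y - x‖ ^ 2 = ρ / 2 * ‖y‖ ^ 2 - ρ * ⟪x, y⟫ + ρ / 2 * ‖x‖ ^ 2 := by
    rw [hN2]; ring
  linarith [key2, hN2']

end Helpers
section Helpers2
variable {E : Type*} [NormedAddCommGroup E] [InnerProductSpace ℝ E]

/-- Quadratic growth of the prox subproblem away from its minimizer. -/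
lemma prox_strong_min (f : E → ℝ) (ρ ρb : ℝ) (hρ : 0 ≤ ρ) (hρb : ρ < ρb)
    (hwc : ConvexOn ℝ Set.univ fun z => f z + ρ / 2 * ‖z‖ ^ 2)
    (X : Set E) (hXconv : Convex ℝ X) (x xhat : E) (hx : x ∈ X) (hxhatX : xhat ∈ X)
    (hxhatmin : ∀ y ∈ X,
      f xhat + ρb / 2 * ‖xhat - x‖ ^ 2 ≤ f y + ρb / 2 * ‖y - x‖ ^ 2) :
    f xhat + (ρb - ρ / 2) * ‖xhat - x‖ ^ 2 ≤ f x := by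
  refine le_of_forall_sub_le fun ε hε => ?_
  set M : ℝ := ‖xhat - x‖ with hMdef
  set t : ℝ := min 1 (ε / ((ρb - ρ) / 2 * M ^ 2 + 1)) with htdef
  have h4 : 0 ≤ (ρb - ρ) / 2 * M ^ 2 := mul_nonneg (by linarith) (sq_nonneg M)
  have hden : 0 < (ρb - ρ) / 2 * M ^ 2 + 1 := by linarith
  have ht0 : 0 < t := lt_min one_pos (div_pos hε hden)
  have ht1 : t ≤ 1 := min_le_left _ _
  have htε : t * ((ρb - ρ) / 2 * M ^ 2) ≤ ε := by
    have h2 : t ≤ ε / ((ρb - ρ) / 2 * M ^ 2 + 1) := min_le_right _ _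
    have h5 : t * ((ρb - ρ) / 2 * M ^ 2 + 1) ≤ ε := by
      have h6 := mul_le_mul_of_nonneg_right h2 (le_of_lt hden)
      rwa [div_mul_cancel₀ _ (ne_of_gt hden)] at h6
    nlinarith
  set z : E := xhat + t • (x - xhat) with hzdef
  have hz : (1 - t) • xhat + t • x = z := by
    rw [hzdef, sub_smul, one_smul, smul_sub]; abel
  have hzX : z ∈ X := by
    rw [← hz]
    exact hXconv hxhatX hx (by linarith) ht0.le (by ring)
  have hmin := hxhatmin z hzX
  have hcvx : f z + ρ / 2 * ‖z‖ ^ 2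
      ≤ (1 - t) * (f xhat + ρ / 2 * ‖xhat‖ ^ 2) + t * (f x + ρ / 2 * ‖x‖ ^ 2) := by
    have := hwc.2 (Set.mem_univ xhat) (Set.mem_univ x)
      (show (0:ℝ) ≤ 1 - t by linarith) ht0.le (show (1 - t) + t = 1 by ring)
    rw [hz] at this
    simpa using this
  have hz2 : ‖z‖ ^ 2 = ‖xhat‖ ^ 2 + 2 * (t * ⟪xhat, x - xhat⟫) + t ^ 2 * ‖x - xhat‖ ^ 2 := by
    rw [hzdef, norm_add_sq_real, real_inner_smul_right, norm_smul, Real.norm_eq_abs,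
      mul_pow, sq_abs]
  have hix : ⟪xhat, x - xhat⟫ = ⟪xhat, x⟫ - ‖xhat‖ ^ 2 := by
    rw [inner_sub_right, real_inner_self_eq_norm_sq]
  have hMrev : ‖x - xhat‖ = M := by rw [hMdef, norm_sub_rev]
  have hM2 : M ^ 2 = ‖xhat‖ ^ 2 - 2 * ⟪xhat, x⟫ + ‖x‖ ^ 2 := by
    rw [hMdef, norm_sub_sq_real]
  have hz2' : ‖z‖ ^ 2 = ‖xhat‖ ^ 2 + 2 * t * ⟪xhat, x⟫ - 2 * t * ‖xhat‖ ^ 2 + t ^ 2 * M ^ 2 := by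
    rw [hz2, hix, hMrev]; ring
  have hcvx' : f z + ρ / 2 * (‖xhat‖ ^ 2 + 2 * t * ⟪xhat, x⟫ - 2 * t * ‖xhat‖ ^ 2 + t ^ 2 * M ^ 2)
      ≤ (1 - t) * (f xhat + ρ / 2 * ‖xhat‖ ^ 2) + t * (f x + ρ / 2 * ‖x‖ ^ 2) := by
    rw [← hz2']; exact hcvx
  -- ‖z - x‖² = (1 - t)² M²
  have hzx : z - x = (1 - t) • (xhat - x) := by
    rw [hzdef, sub_smul, one_smul, smul_sub, smul_sub]; abel
  have hzx2 : ‖z - x‖ ^ 2 = (1 - t) ^ 2 * M ^ 2 := by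
    rw [hzx, norm_smul, Real.norm_eq_abs, mul_pow, sq_abs, hMdef]
  rw [hzx2] at hmin
  -- combine: t * (f xhat + (ρb - ρ/2) M² - t(ρb-ρ)/2 M²·stuff) ≤ t * f x (after algebra)
  have hρM : ρ / 2 * M ^ 2 = ρ / 2 * ‖xhat‖ ^ 2 - ρ * ⟪xhat, x⟫ + ρ / 2 * ‖x‖ ^ 2 := by
    rw [hM2]; ring
  have hρMt : t * (ρ / 2 * M ^ 2)
      = t * (ρ / 2 * ‖xhat‖ ^ 2 - ρ * ⟪xhat, x⟫ + ρ / 2 * ‖x‖ ^ 2) := by rw [hρM]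
  have key : t * (f xhat + (ρb - ρ / 2) * M ^ 2 - t * ((ρb - ρ) / 2 * M ^ 2))
      ≤ t * f x := by nlinarith [hmin, hcvx', hρMt]
  have key2 := le_of_mul_le_mul_left key ht0
  have htM : t * ((ρb - ρ) / 2 * M ^ 2) ≤ ε := htε
  linarith [key2, htM]

/-- Obtuse angle criterion for a nearest-point projection onto a convex set. -/
lemma proj_obtuse (X : Set E) (hXconv : Convex ℝ X) (proj : E → E)
    (hproj : ∀ z : E, proj z ∈ X ∧ ∀ y ∈ X, ‖z - proj z‖ ≤ ‖z - y‖)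
    (z y : E) (hy : y ∈ X) : ⟪z - proj z, y - proj z⟫ ≤ 0 := by
  set p : E := proj z with hpdef
  refine le_of_forall_sub_le fun ε hε => ?_
  set t : ℝ := min 1 (2 * ε / (‖y - p‖ ^ 2 + 1)) with htdef
  have hden : (0:ℝ) < ‖y - p‖ ^ 2 + 1 := by positivity
  have ht0 : 0 < t := lt_min one_pos (div_pos (by linarith) hden)
  have ht1 : t ≤ 1 := min_le_left _ _
  have htε : t * ‖y - p‖ ^ 2 ≤ 2 * ε := by
    have h2 : t ≤ 2 * ε / (‖y - p‖ ^ 2 + 1) := min_le_right _ _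
    have h5 : t * (‖y - p‖ ^ 2 + 1) ≤ 2 * ε := by
      have h6 := mul_le_mul_of_nonneg_right h2 (le_of_lt hden)
      rwa [div_mul_cancel₀ _ (ne_of_gt hden)] at h6
    nlinarith [sq_nonneg ‖y - p‖]
  set w : E := p + t • (y - p) with hwdef
  have hwX : w ∈ X := by
    have h := hXconv (hproj z).1 hy (show (0:ℝ) ≤ 1 - t by linarith) ht0.le
      (show (1 - t) + t = 1 by ring)
    have : (1 - t) • p + t • y = w := by
      rw [hwdef, sub_smul, one_smul, smul_sub]; abel
    rwa [this] at h
  have hle : ‖z - p‖ ≤ ‖z - w‖ := (hproj z).2 w hwX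
  have hsq : ‖z - p‖ ^ 2 ≤ ‖z - w‖ ^ 2 := by
    have := mul_self_le_mul_self (norm_nonneg _) hle
    nlinarith [this]
  have hzw : z - w = (z - p) - t • (y - p) := by rw [hwdef]; abel
  have hexp : ‖z - w‖ ^ 2
      = ‖z - p‖ ^ 2 - 2 * (t * ⟪z - p, y - p⟫) + t ^ 2 * ‖y - p‖ ^ 2 := by
    rw [hzw, norm_sub_sq_real, real_inner_smul_right, norm_smul, Real.norm_eq_abs,
      mul_pow, sq_abs]
  rw [hexp] at hsq
  have key : t * (2 * ⟪z - p, y - p⟫) ≤ t * (t * ‖y - p‖ ^ 2) := by nlinarith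
  have key2 := le_of_mul_le_mul_left key ht0
  have : t * ‖y - p‖ ^ 2 ≤ 2 * ε := htε
  linarith

/-- Squared-distance nonexpansiveness of projection relative to a point of `X`. -/
lemma proj_sq_le (X : Set E) (hXconv : Convex ℝ X) (proj : E → E)
    (hproj : ∀ z : E, proj z ∈ X ∧ ∀ y ∈ X, ‖z - proj z‖ ≤ ‖z - y‖)
    (z y : E) (hy : y ∈ X) : ‖proj z - y‖ ^ 2 ≤ ‖z - y‖ ^ 2 := by
  have hob := proj_obtuse X hXconv proj hproj z y hy
  have hsplit : z - y = (z - proj z) + (proj z - y) := by abel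
  have hexp : ‖z - y‖ ^ 2 = ‖z - proj z‖ ^ 2 + 2 * ⟪z - proj z, proj z - y⟫
      + ‖proj z - y‖ ^ 2 := by rw [hsplit, norm_add_sq_real]
  have hinner : ⟪z - proj z, proj z - y⟫ = -⟪z - proj z, y - proj z⟫ := by
    rw [← inner_neg_right, neg_sub]
  nlinarith [sq_nonneg ‖z - proj z‖, hexp, hinner, hob]

lemma proj_norm_le (X : Set E) (hXconv : Convex ℝ X) (proj : E → E)
    (hproj : ∀ z : E, proj z ∈ X ∧ ∀ y ∈ X, ‖z - proj z‖ ≤ ‖z - y‖)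
    (z y : E) (hy : y ∈ X) : ‖proj z - y‖ ≤ ‖z - y‖ := by
  have h := proj_sq_le X hXconv proj hproj z y hy
  have := Real.sqrt_le_sqrt h
  rwa [Real.sqrt_sq (norm_nonneg _), Real.sqrt_sq (norm_nonneg _)] at this

/-- The projection is 1-Lipschitz, hence continuous. -/
lemma proj_lipschitz (X : Set E) (hXconv : Convex ℝ X) (proj : E → E)
    (hproj : ∀ z : E, proj z ∈ X ∧ ∀ y ∈ X, ‖z - proj z‖ ≤ ‖z - y‖) :
    Continuous proj := by
  have hlip : LipschitzWith 1 proj := by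
    refine LipschitzWith.of_dist_le_mul fun z1 z2 => ?_
    rw [NNReal.coe_one, one_mul, dist_eq_norm, dist_eq_norm]
    set p1 := proj z1; set p2 := proj z2
    have h1 : ⟪z1 - p1, p2 - p1⟫ ≤ 0 := proj_obtuse X hXconv proj hproj z1 p2 (hproj z2).1
    have h2 : ⟪z2 - p2, p1 - p2⟫ ≤ 0 := proj_obtuse X hXconv proj hproj z2 p1 (hproj z1).1
    have hkey : ‖p1 - p2‖ ^ 2 ≤ ⟪z1 - z2, p1 - p2⟫ := by
      have e1 : ⟪z2 - p2, p1 - p2⟫ = -⟪z2 - p2, p2 - p1⟫ := by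
        rw [← inner_neg_right, neg_sub]
      have hsum : ⟪(z1 - p1) - (z2 - p2), p2 - p1⟫
          = ⟪z1 - p1, p2 - p1⟫ - ⟪z2 - p2, p2 - p1⟫ := inner_sub_left _ _ _
      have hid : (z1 - p1) - (z2 - p2) = (z1 - z2) - (p1 - p2) := by abel
      have hsub : ⟪(z1 - z2) - (p1 - p2), p2 - p1⟫
          = ⟪z1 - z2, p2 - p1⟫ - ⟪p1 - p2, p2 - p1⟫ := inner_sub_left _ _ _
      have hneg : ⟪p1 - p2, p2 - p1⟫ = -‖p1 - p2‖ ^ 2 := by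
        have h7 : p2 - p1 = -(p1 - p2) := by abel
        rw [h7, inner_neg_right, real_inner_self_eq_norm_sq]
      have hflip : ⟪z1 - z2, p2 - p1⟫ = -⟪z1 - z2, p1 - p2⟫ := by
        rw [← inner_neg_right, neg_sub]
      nlinarith [hsum, hid ▸ hsub, hneg, hflip, h1, h2, e1]
    have hcs : ⟪z1 - z2, p1 - p2⟫ ≤ ‖z1 - z2‖ * ‖p1 - p2‖ := by
      have := abs_real_inner_le_norm (z1 - z2) (p1 - p2)
      exact (le_abs_self _).trans this
    rcases eq_or_lt_of_le (norm_nonneg (p1 - p2)) with h0 | h0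
    · rw [← h0]; exact norm_nonneg _
    · have : ‖p1 - p2‖ * ‖p1 - p2‖ ≤ ‖z1 - z2‖ * ‖p1 - p2‖ := by nlinarith
      exact le_of_mul_le_mul_right this h0
  exact hlip.continuous

end Helpers2

set_option maxHeartbeats 2000000 in
/-- One step of the projected stochastic subgradient method on `φ = f + δ_X`, with `f`
`ρ`-weakly convex and a stochastic subgradient oracle `G` with second moment bound `L²`,
decreases the Moreau envelope `φ_{1/ρ̄}` (denoted `env`, characterized as a greatest lower
bound) in expectation:
`E[env(proj_X(x − αG(x,ξ)))] ≤ env(x) − α(ρ̄−ρ)ρ̄‖x − x̂‖² + α²ρ̄L²/2`,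
where `x̂ = prox_{φ/ρ̄}(x)`.  (Recall `‖∇φ_{1/ρ̄}(x)‖ = ρ̄‖x − x̂‖`.) -/
theorem projected_stochastic_subgradient_one_step
    {E : Type*} [NormedAddCommGroup E] [InnerProductSpace ℝ E] [FiniteDimensional ℝ E]
    [MeasurableSpace E] [BorelSpace E]
    {Ω : Type*} [MeasurableSpace Ω] (P : Measure Ω) [IsProbabilityMeasure P]
    (f : E → ℝ) (ρ : ℝ) (hρ : 0 ≤ ρ)
    (hwc : ConvexOn ℝ Set.univ fun z => f z + ρ / 2 * ‖z‖ ^ 2)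
    (X : Set E) (hXne : X.Nonempty) (hXcl : IsClosed X) (hXconv : Convex ℝ X)
    (G : E → Ω → E) (hGmeas : Measurable fun p : E × Ω => G p.1 p.2)
    (L : ℝ)
    (hGint : ∀ x ∈ X, Integrable (G x) P)
    (hGgrad : ∀ x ∈ X, IsFSubgradR f x (∫ ξ, G x ξ ∂P))
    (hGmom : ∀ x ∈ X, ∫⁻ ξ, ENNReal.ofReal (‖G x ξ‖ ^ 2) ∂P ≤ ENNReal.ofReal (L ^ 2))
    (proj : E → E)
    (hproj : ∀ z : E, proj z ∈ X ∧ ∀ y ∈ X, ‖z - proj z‖ ≤ ‖z - y‖)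
    (ρb : ℝ) (hρb : ρ < ρb) (a : ℝ) (ha : 0 < a)
    (x : E) (hx : x ∈ X)
    (xhat : E) (hxhatX : xhat ∈ X)
    (hxhatmin : ∀ y ∈ X,
      f xhat + ρb / 2 * ‖xhat - x‖ ^ 2 ≤ f y + ρb / 2 * ‖y - x‖ ^ 2)
    (env : E → ℝ)
    (henv : ∀ z : E, IsGLB ((fun y => f y + ρb / 2 * ‖y - z‖ ^ 2) '' X) (env z)) :
    ∫ ξ, env (proj (x - a • G x ξ)) ∂P
      ≤ env x - a * (ρb - ρ) * ρb * ‖x - xhat‖ ^ 2 + a ^ 2 * ρb * L ^ 2 / 2 := by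
  have hρb0 : 0 < ρb := lt_of_le_of_lt hρ hρb
  have hμ : 0 < ρb - ρ := by linarith
  obtain ⟨g, hgdef⟩ : ∃ g : E, g = ∫ ξ, G x ξ ∂P := ⟨_, rfl⟩
  have hA1 : ∀ y : E, f x + ⟪g, y - x⟫ - ρ / 2 * ‖y - x‖ ^ 2 ≤ f y :=
    fsubgrad_global f ρ hρ hwc x g (hgdef ▸ hGgrad x hx)
  have hA2 : f xhat + (ρb - ρ / 2) * ‖xhat - x‖ ^ 2 ≤ f x :=
    prox_strong_min f ρ ρb hρ hρb hwc X hXconv x xhat hx hxhatX hxhatmin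
  have hMrev : ‖xhat - x‖ = ‖x - xhat‖ := norm_sub_rev _ _
  have hK : (ρb - ρ) * ‖x - xhat‖ ^ 2 ≤ ⟪g, x - xhat⟫ := by
    have h1 := hA1 xhat
    have h2 : ⟪g, xhat - x⟫ = -⟪g, x - xhat⟫ := by
      have h3 : xhat - x = -(x - xhat) := by abel
      rw [h3, inner_neg_right]
    rw [h2, hMrev] at h1
    rw [hMrev] at hA2
    linarith [hA2, h1]
  have henvx : env x = f xhat + ρb / 2 * ‖xhat - x‖ ^ 2 := by
    refine le_antisymm ((henv x).1 ⟨xhat, hxhatX, rfl⟩) ((henv x).2 ?_)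
    rintro w ⟨y, hy, rfl⟩
    exact hxhatmin y hy
  -- measurability
  have hGxmeas : Measurable (fun ξ => G x ξ) :=
    hGmeas.comp (measurable_const.prodMk measurable_id)
  have humeas : Measurable (fun ξ => x - a • G x ξ) :=
    measurable_const.sub (hGxmeas.const_smul a)
  have hprojcont : Continuous proj := proj_lipschitz X hXconv proj hproj
  have hxpmeas : Measurable (fun ξ => proj (x - a • G x ξ)) :=
    hprojcont.measurable.comp humeas
  have henvUSC : UpperSemicontinuous env := by
    intro z0 c hc
    obtain ⟨w, hwS, hwc'⟩ :
        ∃ w ∈ ((fun y => f y + ρb / 2 * ‖y - z0‖ ^ 2) '' X), w < c := by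
      by_contra hno
      push_neg at hno
      exact absurd ((henv z0).2 fun w hw => hno w hw) (not_le.mpr hc)
    obtain ⟨y, hyX, hyw⟩ := hwS
    have hcont : Continuous fun z : E => f y + ρb / 2 * ‖y - z‖ ^ 2 := by
      fun_prop
    have hev : ∀ᶠ z in nhds z0, f y + ρb / 2 * ‖y - z‖ ^ 2 < c :=
      (hcont.continuousAt (x := z0)).eventually_lt_const (by
        show f y + ρb / 2 * ‖y - z0‖ ^ 2 < c
        rw [show f y + ρb / 2 * ‖y - z0‖ ^ 2 = w from hyw]; exact hwc')
    filter_upwards [hev] with z hz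
    exact lt_of_le_of_lt ((henv z).1 ⟨y, hyX, rfl⟩) hz
  have henvmeas : Measurable env := henvUSC.measurable
  -- integrability of the oracle
  have hGx : Integrable (fun ξ => G x ξ) P := hGint x hx
  have hGsqint : Integrable (fun ξ => ‖G x ξ‖ ^ 2) P := by
    refine ⟨(hGxmeas.norm.pow_const 2).aestronglyMeasurable, ?_⟩
    rw [hasFiniteIntegral_iff_ofReal (ae_of_all _ fun ξ => sq_nonneg _)]
    exact lt_of_le_of_lt (hGmom x hx) ENNReal.ofReal_lt_top
  have hS : ∫ ξ, ‖G x ξ‖ ^ 2 ∂P ≤ L ^ 2 := by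
    rw [integral_eq_lintegral_of_nonneg_ae (ae_of_all _ fun ξ => sq_nonneg _)
      (hGxmeas.norm.pow_const 2).aestronglyMeasurable]
    calc (∫⁻ ξ, ENNReal.ofReal (‖G x ξ‖ ^ 2) ∂P).toReal
        ≤ (ENNReal.ofReal (L ^ 2)).toReal :=
          ENNReal.toReal_mono ENNReal.ofReal_ne_top (hGmom x hx)
      _ = L ^ 2 := ENNReal.toReal_ofReal (sq_nonneg L)
  have hinner : Integrable (fun ξ => ⟪x - xhat, G x ξ⟫) P := hGx.const_inner (x - xhat)
  have hintinner : ∫ ξ, ⟪x - xhat, G x ξ⟫ ∂P = ⟪x - xhat, g⟫ := by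
    rw [hgdef]; exact integral_inner hGx (x - xhat)
  -- expansion of the squared distance after the gradient step
  have hexp : ∀ ξ : Ω, ‖x - a • G x ξ - xhat‖ ^ 2
      = ‖x - xhat‖ ^ 2 - 2 * a * ⟪x - xhat, G x ξ⟫ + a ^ 2 * ‖G x ξ‖ ^ 2 := by
    intro ξ
    have h : x - a • G x ξ - xhat = (x - xhat) - a • G x ξ := by abel
    rw [h, norm_sub_sq_real, real_inner_smul_right, norm_smul, Real.norm_eq_abs,
      mul_pow, sq_abs]
    ring
  have hBeq : (fun ξ => f xhat + ρb / 2 * ‖x - a • G x ξ - xhat‖ ^ 2)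
      = fun ξ => (f xhat + ρb / 2 * ‖x - xhat‖ ^ 2)
        + ((-(ρb * a)) * ⟪x - xhat, G x ξ⟫ + ρb / 2 * a ^ 2 * ‖G x ξ‖ ^ 2) :=
    funext fun ξ => by rw [hexp ξ]; ring
  have hi1 : Integrable (fun ξ => (-(ρb * a)) * ⟪x - xhat, G x ξ⟫) P :=
    hinner.const_mul _
  have hi2 : Integrable (fun ξ => ρb / 2 * a ^ 2 * ‖G x ξ‖ ^ 2) P :=
    hGsqint.const_mul _
  have hi12 : Integrable (fun ξ => (-(ρb * a)) * ⟪x - xhat, G x ξ⟫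
      + ρb / 2 * a ^ 2 * ‖G x ξ‖ ^ 2) P := hi1.add hi2
  have hBint : Integrable (fun ξ => f xhat + ρb / 2 * ‖x - a • G x ξ - xhat‖ ^ 2) P := by
    rw [hBeq]
    exact (integrable_const _).add hi12
  have hBval : ∫ ξ, (f xhat + ρb / 2 * ‖x - a • G x ξ - xhat‖ ^ 2) ∂P
      = (f xhat + ρb / 2 * ‖x - xhat‖ ^ 2)
        - ρb * a * ⟪x - xhat, g⟫ + ρb / 2 * a ^ 2 * (∫ ξ, ‖G x ξ‖ ^ 2 ∂P) := by
    rw [hBeq, integral_add (integrable_const (f xhat + ρb / 2 * ‖x - xhat‖ ^ 2)) hi12,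
      integral_add hi1 hi2,
      integral_const_mul, integral_const_mul, integral_const, hintinner]
    simp [measure_univ]
    ring
  -- pointwise bound
  have hpt : ∀ ξ : Ω, env (proj (x - a • G x ξ))
      ≤ f xhat + ρb / 2 * ‖x - a • G x ξ - xhat‖ ^ 2 := by
    intro ξ
    have h1 : env (proj (x - a • G x ξ))
        ≤ f xhat + ρb / 2 * ‖xhat - proj (x - a • G x ξ)‖ ^ 2 :=
      (henv _).1 ⟨xhat, hxhatX, rfl⟩
    have h2 : ‖proj (x - a • G x ξ) - xhat‖ ^ 2 ≤ ‖x - a • G x ξ - xhat‖ ^ 2 :=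
      proj_sq_le X hXconv proj hproj _ xhat hxhatX
    have h3 : ‖xhat - proj (x - a • G x ξ)‖ = ‖proj (x - a • G x ξ) - xhat‖ :=
      norm_sub_rev _ _
    rw [h3] at h1
    have h4 := mul_le_mul_of_nonneg_left h2 (by linarith : (0:ℝ) ≤ ρb / 2)
    linarith
  -- lower bound on the envelope
  have hlb : ∀ z : E, f x - (‖g‖ + ρb * ‖z - x‖) ^ 2 / (2 * (ρb - ρ)) ≤ env z := by
    intro z
    refine (henv z).2 ?_
    rintro w ⟨y, hy, rfl⟩
    show f x - (‖g‖ + ρb * ‖z - x‖) ^ 2 / (2 * (ρb - ρ)) ≤ f y + ρb / 2 * ‖y - z‖ ^ 2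
    have h1 := hA1 y
    have hcs : -(‖g‖ * ‖y - x‖) ≤ ⟪g, y - x⟫ := by
      have h5 := abs_real_inner_le_norm g (y - x)
      have h6 := neg_abs_le (⟪g, y - x⟫ : ℝ)
      linarith
    have htri : |‖y - x‖ - ‖z - x‖| ≤ ‖y - z‖ := by
      have h7 := abs_norm_sub_norm_le (y - x) (z - x)
      have h8 : (y - x) - (z - x) = y - z := by abel
      rwa [h8] at h7
    have hsq : (‖y - x‖ - ‖z - x‖) ^ 2 ≤ ‖y - z‖ ^ 2 := by
      nlinarith [htri, abs_nonneg (‖y - x‖ - ‖z - x‖), sq_abs (‖y - x‖ - ‖z - x‖),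
        norm_nonneg (y - z)]
    have hD : 2 * (ρb - ρ) * ((‖g‖ + ρb * ‖z - x‖) ^ 2 / (2 * (ρb - ρ)))
        = (‖g‖ + ρb * ‖z - x‖) ^ 2 := by
      field_simp
    have hquad : 0 ≤ (ρb - ρ) * ‖y - x‖ ^ 2 - 2 * (‖g‖ + ρb * ‖z - x‖) * ‖y - x‖
        + 2 * ((‖g‖ + ρb * ‖z - x‖) ^ 2 / (2 * (ρb - ρ))) := by
      have h9 : 0 ≤ (ρb - ρ) * ((ρb - ρ) * ‖y - x‖ ^ 2
          - 2 * (‖g‖ + ρb * ‖z - x‖) * ‖y - x‖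
          + 2 * ((‖g‖ + ρb * ‖z - x‖) ^ 2 / (2 * (ρb - ρ)))) := by
        linarith [sq_nonneg ((ρb - ρ) * ‖y - x‖ - (‖g‖ + ρb * ‖z - x‖)), hD]
      exact nonneg_of_mul_nonneg_right h9 hμ
    have hsq' := mul_le_mul_of_nonneg_left hsq (by linarith : (0:ℝ) ≤ ρb / 2)
    have hw2 : 0 ≤ ρb * ‖z - x‖ ^ 2 := mul_nonneg hρb0.le (sq_nonneg _)
    linarith [h1, hcs, hsq', hquad, hw2]
  -- norm bound for the projected point
  have hstep : ∀ ξ : Ω, ‖x - a • G x ξ - xhat‖ ≤ ‖x - xhat‖ + a * ‖G x ξ‖ := by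
    intro ξ
    have h3 : x - a • G x ξ - xhat = (x - xhat) - a • G x ξ := by abel
    rw [h3]
    refine (norm_sub_le _ _).trans ?_
    rw [norm_smul, Real.norm_eq_abs, abs_of_pos ha]
  have hxpnorm : ∀ ξ : Ω, ‖proj (x - a • G x ξ) - x‖
      ≤ 2 * ‖x - xhat‖ + a * ‖G x ξ‖ := by
    intro ξ
    have h1 : ‖proj (x - a • G x ξ) - xhat‖ ≤ ‖x - a • G x ξ - xhat‖ :=
      proj_norm_le X hXconv proj hproj _ xhat hxhatX
    have h5 := dist_triangle (proj (x - a • G x ξ)) xhat x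
    rw [dist_eq_norm, dist_eq_norm, dist_eq_norm] at h5
    have h2 := hstep ξ
    rw [hMrev] at h5
    linarith
  -- integrable majorant
  have hMaj : Integrable (fun ξ => |f xhat| + |f x|
      + ρb / 2 * (‖x - xhat‖ + a * ‖G x ξ‖) ^ 2
      + (‖g‖ + ρb * (2 * ‖x - xhat‖ + a * ‖G x ξ‖)) ^ 2 / (2 * (ρb - ρ))) P := by
    have heq : (fun ξ : Ω => |f xhat| + |f x|
        + ρb / 2 * (‖x - xhat‖ + a * ‖G x ξ‖) ^ 2
        + (‖g‖ + ρb * (2 * ‖x - xhat‖ + a * ‖G x ξ‖)) ^ 2 / (2 * (ρb - ρ)))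
        = fun ξ : Ω => (|f xhat| + |f x| + ρb / 2 * ‖x - xhat‖ ^ 2
            + (‖g‖ + 2 * ρb * ‖x - xhat‖) ^ 2 / (2 * (ρb - ρ)))
          + ((ρb * a * ‖x - xhat‖ + (‖g‖ + 2 * ρb * ‖x - xhat‖) * ρb * a / (ρb - ρ))
              * ‖G x ξ‖
            + (ρb / 2 * a ^ 2 + ρb ^ 2 * a ^ 2 / (2 * (ρb - ρ))) * ‖G x ξ‖ ^ 2) := by
      funext ξ
      field_simp
      ring
    rw [heq]
    exact (integrable_const _).add ((hGx.norm.const_mul _).add (hGsqint.const_mul _))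
  have henvint : Integrable (fun ξ => env (proj (x - a • G x ξ))) P := by
    refine Integrable.mono' hMaj ((henvmeas.comp hxpmeas).aestronglyMeasurable)
      (ae_of_all _ fun ξ => ?_)
    rw [Real.norm_eq_abs, abs_le]
    have h2μ : (0:ℝ) < 2 * (ρb - ρ) := by linarith
    constructor
    · have hl := hlb (proj (x - a • G x ξ))
      have hst : ‖g‖ + ρb * ‖proj (x - a • G x ξ) - x‖
          ≤ ‖g‖ + ρb * (2 * ‖x - xhat‖ + a * ‖G x ξ‖) := by
        have h9 := mul_le_mul_of_nonneg_left (hxpnorm ξ) hρb0.le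
        linarith
      have hs0 : (0:ℝ) ≤ ‖g‖ + ρb * ‖proj (x - a • G x ξ) - x‖ :=
        add_nonneg (norm_nonneg _) (mul_nonneg hρb0.le (norm_nonneg _))
      have hmono := pow_le_pow_left₀ hs0 hst 2
      have hdiv := (div_le_div_iff_of_pos_right h2μ).mpr hmono
      have hq1 : (0:ℝ) ≤ ρb / 2 * (‖x - xhat‖ + a * ‖G x ξ‖) ^ 2 :=
        mul_nonneg (by linarith) (sq_nonneg _)
      linarith [hl, hdiv, neg_abs_le (f x), abs_nonneg (f xhat), hq1]
    · have hu := hpt ξ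
      have h2 := hstep ξ
      have h2sq : ‖x - a • G x ξ - xhat‖ ^ 2 ≤ (‖x - xhat‖ + a * ‖G x ξ‖) ^ 2 :=
        pow_le_pow_left₀ (norm_nonneg _) h2 2
      have h4 := mul_le_mul_of_nonneg_left h2sq (by linarith : (0:ℝ) ≤ ρb / 2)
      have hq2 : (0:ℝ) ≤ (‖g‖ + ρb * (2 * ‖x - xhat‖ + a * ‖G x ξ‖)) ^ 2 / (2 * (ρb - ρ)) :=
        div_nonneg (sq_nonneg _) (by linarith)
      linarith [hu, h4, le_abs_self (f xhat), abs_nonneg (f x), hq2]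
  -- final chain
  calc ∫ ξ, env (proj (x - a • G x ξ)) ∂P
      ≤ ∫ ξ, (f xhat + ρb / 2 * ‖x - a • G x ξ - xhat‖ ^ 2) ∂P :=
        integral_mono henvint hBint hpt
    _ = (f xhat + ρb / 2 * ‖x - xhat‖ ^ 2)
        - ρb * a * ⟪x - xhat, g⟫ + ρb / 2 * a ^ 2 * (∫ ξ, ‖G x ξ‖ ^ 2 ∂P) := hBval
    _ ≤ env x - a * (ρb - ρ) * ρb * ‖x - xhat‖ ^ 2 + a ^ 2 * ρb * L ^ 2 / 2 := by
        have hIc : (⟪x - xhat, g⟫ : ℝ) = ⟪g, x - xhat⟫ := real_inner_comm _ _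
        rw [hIc]
        have h1 := mul_le_mul_of_nonneg_left hK (by positivity : (0:ℝ) ≤ ρb * a)
        have h2 := mul_le_mul_of_nonneg_left hS (by positivity : (0:ℝ) ≤ ρb / 2 * a ^ 2)
        have henvx' : env x = f xhat + ρb / 2 * ‖x - xhat‖ ^ 2 := by
          rw [henvx, hMrev]
        linarith [h1, h2, henvx']
end

section
/- Let f : ℝ^d → ℝ be C¹-smooth with ρ-Lipschitz gradient, r : ℝ^d → ℝ ∪ {+∞} proper closed convex, and set φ = f + r. Let (Ω, F, P) be a probability space and G : ℝ^d × Ω → ℝ^d measurable with ∫ G(x,ξ) dP(ξ) = ∇f(x) and ∫ ‖G(x,ξ) − ∇f(x)‖² dP(ξ) ≤ σ², for all x ∈ dom r. Fix ρ̄ > ρ, α ∈ (0, 1/ρ̄], x ∈ dom r, and set x̂ = prox_{φ/ρ̄}(x); suppose ρ̄(x − x̂) − ∇f(x̂) ∈ ∂r(x̂). Then the proximal stochastic gradient step x⁺(ξ) = prox_{αr}(x − αG(x,ξ)) satisfies ∫_Ω ‖x⁺(ξ) − x̂‖² dP(ξ) ≤ ‖x − x̂‖² + α²σ² − α(ρ̄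 − ρ)‖x − x̂‖². -/
open MeasureTheory RealInnerProductSpace

/-- Convexity for extended-real-valued functions `g : E → ℝ ∪ {+∞}` on a set `s`. -/
def ERealConvexOn {E : Type*} [AddCommMonoid E] [SMul ℝ E]
    (s : Set E) (g : E → EReal) : Prop :=
  ∀ x ∈ s, ∀ y ∈ s, ∀ a b : ℝ, 0 ≤ a → 0 ≤ b → a + b = 1 →
    g (a • x + b • y) ≤ (a : EReal) * g x + (b : EReal) * g y

lemma prox_subgrad {E : Type*} [NormedAddCommGroup E] [InnerProductSpace ℝ E]
    (r : E → EReal) (hrbot : ∀ y, r y ≠ ⊥)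
    (hrconv : ERealConvexOn Set.univ r)
    (a : ℝ) (ha : 0 < a) (u z : E) (hu : r u ≠ ⊤)
    (hmin : ∀ y, r u + ((1/(2*a) * ‖u - z‖^2 : ℝ) : EReal)
      ≤ r y + ((1/(2*a) * ‖y - z‖^2 : ℝ) : EReal))
    (y : E) (hy : r y ≠ ⊤) :
    (r u).toReal + (1/a) * ⟪z - u, y - u⟫ ≤ (r y).toReal := by
  set ru := (r u).toReal with hru_def
  set ry := (r y).toReal with hry_def
  have hru : r u = (ru : EReal) := (EReal.coe_toReal hu (hrbot u)).symm
  have hry : r y = (ry : EReal) := (EReal.coe_toReal hy (hrbot y)).symm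
  set I := (⟪u - z, y - u⟫ : ℝ) with hI
  set K := ‖y - u‖^2 with hKdef
  have hK : (0:ℝ) ≤ K := sq_nonneg _
  have key : ∀ t : ℝ, 0 < t → t ≤ 1 →
      0 ≤ (ry - ru) + (1/a) * I + t/(2*a) * K := by
    intro t ht ht1
    have hconv := hrconv u (Set.mem_univ u) y (Set.mem_univ y) (1 - t) t
      (by linarith) (by linarith) (by ring)
    rw [hru, hry] at hconv
    have hconv' : r ((1-t) • u + t • y) ≤ (((1-t) * ru + t * ry : ℝ) : EReal) := by
      exact_mod_cast hconv
    have hmin' := hmin ((1-t) • u + t • y)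
    have hcomb : (ru : EReal) + ((1/(2*a) * ‖u - z‖^2 : ℝ) : EReal)
        ≤ (((1-t) * ru + t * ry : ℝ) : EReal)
          + ((1/(2*a) * ‖(1-t) • u + t • y - z‖^2 : ℝ) : EReal) := by
      rw [← hru]
      exact hmin'.trans (add_le_add_left hconv' _)
    rw [← EReal.coe_add, ← EReal.coe_add, EReal.coe_le_coe_iff] at hcomb
    have hvec : (1-t) • u + t • y - z = (u - z) + t • (y - u) := by
      rw [sub_smul, one_smul, smul_sub]; abel
    rw [hvec, norm_add_sq_real, real_inner_smul_right, norm_smul, mul_pow] at hcomb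
    simp only [Real.norm_eq_abs, sq_abs] at hcomb
    rw [← hI, ← hKdef] at hcomb
    have ha0 : a ≠ 0 := ne_of_gt ha
    have h2 : 0 ≤ t * ((ry - ru) + 1/a * I + t/(2*a) * K) := by
      have e1 : t * ((ry - ru) + 1/a * I + t/(2*a) * K)
          = ((1-t)*ru + t*ry + 1/(2*a) * (‖u - z‖^2 + 2*(t*I) + t^2*K))
            - (ru + 1/(2*a) * ‖u - z‖^2) := by
        field_simp; ring
      rw [e1]; linarith [hcomb]
    nlinarith [h2, ht]
  have hgoal : 0 ≤ (ry - ru) + (1/a) * I := by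
    by_contra hcon
    push_neg at hcon
    set c := (ry - ru) + (1/a) * I with hc
    have ht0 : 0 < min 1 ((-c) * a / (K + 1)) :=
      lt_min one_pos (div_pos (mul_pos (by linarith) ha) (by linarith))
    have hkey := key _ ht0 (min_le_left _ _)
    have htle : min 1 ((-c)*a/(K+1)) ≤ (-c)*a/(K+1) := min_le_right _ _
    have h4 : ((-c)*a/(K+1)) / (2*a) * K < -c := by
      rw [div_div, div_mul_eq_mul_div, div_lt_iff₀ (by positivity)]
      nlinarith [mul_pos (mul_pos (neg_pos.mpr hcon) ha) (show (0:ℝ) < K+2 by linarith)]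
    have h3 : min 1 ((-c)*a/(K+1)) / (2*a) * K ≤ ((-c)*a/(K+1)) / (2*a) * K := by
      apply mul_le_mul_of_nonneg_right _ hK
      exact div_le_div_of_nonneg_right htle (by linarith) -- might be wrong name
    linarith
  have hflip : (⟪z - u, y - u⟫ : ℝ) = -I := by
    rw [hI, ← inner_neg_left]; congr 1; abel
  rw [hflip]; linarith

/-- One step of the proximal stochastic gradient method on `φ = f + r` with `f` `C¹`-smooth
with `ρ`-Lipschitz gradient, `r` proper closed convex, an unbiased stochastic gradient
oracle `G` with variance bound `σ²`, `ρ̄ > ρ`, `α ∈ (0, 1/ρ̄]`, `x̂ = prox_{φ/ρ̄}(x)`, and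
`ρ̄(x − x̂) − ∇f(x̂) ∈ ∂r(x̂)`.  The step `x⁺(ξ) = prox_{αr}(x − αG(x,ξ))` satisfies
`E‖x⁺(ξ) − x̂‖² ≤ ‖x − x̂‖² + α²σ² − α(ρ̄ − ρ)‖x − x̂‖²`. -/
theorem proximal_stochastic_gradient_contraction
    {E : Type*} [NormedAddCommGroup E] [InnerProductSpace ℝ E] [FiniteDimensional ℝ E]
    [MeasurableSpace E] [BorelSpace E]
    {Ω : Type*} [MeasurableSpace Ω] (P : Measure Ω) [IsProbabilityMeasure P]
    (f : E → ℝ) (hf : ContDiff ℝ 1 f) (ρ : ℝ) (hρ : 0 ≤ ρ)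
    (hflip : ∀ u v : E, ‖gradient f u - gradient f v‖ ≤ ρ * ‖u - v‖)
    (r : E → EReal) (hrbot : ∀ y, r y ≠ ⊥) (hrproper : ∃ y, r y ≠ ⊤)
    (hrlsc : LowerSemicontinuous r) (hrconv : ERealConvexOn Set.univ r)
    (G : E → Ω → E) (hGmeas : Measurable fun p : E × Ω => G p.1 p.2)
    (σ : ℝ)
    (hGint : ∀ z : E, r z ≠ ⊤ → Integrable (G z) P)
    (hGunbiased : ∀ z : E, r z ≠ ⊤ → ∫ ξ, G z ξ ∂P = gradient f z)
    (hGvar : ∀ z : E, r z ≠ ⊤ →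
      ∫⁻ ξ, ENNReal.ofReal (‖G z ξ - gradient f z‖ ^ 2) ∂P ≤ ENNReal.ofReal (σ ^ 2))
    (ρb : ℝ) (hρb : ρ < ρb)
    (a : ℝ) (ha1 : 0 < a) (ha2 : a * ρb ≤ 1)
    (x : E) (hxdom : r x ≠ ⊤)
    (xhat : E)
    (hxhatmin : ∀ y : E,
      (f xhat : EReal) + r xhat + ((ρb / 2 * ‖xhat - x‖ ^ 2 : ℝ) : EReal)
        ≤ (f y : EReal) + r y + ((ρb / 2 * ‖y - x‖ ^ 2 : ℝ) : EReal))
    (hstat : ∀ y : E,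
      r xhat + ((⟪ρb • (x - xhat) - gradient f xhat, y - xhat⟫ : ℝ) : EReal) ≤ r y)
    (s : Ω → E)
    (hs : ∀ ξ : Ω, ∀ y : E,
      r (s ξ) + ((1 / (2 * a) * ‖s ξ - (x - a • G x ξ)‖ ^ 2 : ℝ) : EReal)
        ≤ r y + ((1 / (2 * a) * ‖y - (x - a • G x ξ)‖ ^ 2 : ℝ) : EReal)) :
    ∫ ξ, ‖s ξ - xhat‖ ^ 2 ∂P
      ≤ ‖x - xhat‖ ^ 2 + a ^ 2 * σ ^ 2 - a * (ρb - ρ) * ‖x - xhat‖ ^ 2 := by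
  -- notation
  set v : E := ρb • (x - xhat) - gradient f xhat with hv
  set D : Ω → E := fun ξ => G x ξ - gradient f x with hD
  set c : E := (1 - a*ρb) • (x - xhat) - a • (gradient f x - gradient f xhat) with hc
  set h : Ω → ℝ := fun ξ => ‖c‖^2 - 2*a*⟪c, D ξ⟫ + a^2*‖D ξ‖^2 with hh
  -- r xhat is finite
  have hxh_top : r xhat ≠ ⊤ := by
    intro htop
    have := hstat x
    rw [htop, EReal.top_add_coe, top_le_iff] at this
    exact hxdom this
  -- pointwise bound
  have hpt : ∀ ξ, ‖s ξ - xhat‖^2 ≤ h ξ := by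
    intro ξ
    set u : E := s ξ with hu
    set z : E := x - a • G x ξ with hz
    have hu_top : r u ≠ ⊤ := by
      intro htop
      have := hs ξ x
      rw [← hu, ← hz] at this
      rw [htop, EReal.top_add_coe, top_le_iff] at this
      rw [(EReal.coe_toReal hxdom (hrbot x)).symm, ← EReal.coe_add] at this
      exact (EReal.coe_ne_top _) this
    have hsub := prox_subgrad r hrbot hrconv a ha1 u z hu_top
      (fun y => by have := hs ξ y; rw [← hu, ← hz] at this; exact this) xhat hxh_top
    have hstat' : (r xhat).toReal + ⟪v, u - xhat⟫ ≤ (r u).toReal := by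
      have := hstat u
      rw [(EReal.coe_toReal hxh_top (hrbot xhat)).symm,
        (EReal.coe_toReal hu_top (hrbot u)).symm, ← EReal.coe_add,
        EReal.coe_le_coe_iff] at this
      exact this
    have hadd : (1/a) * ⟪z - u, xhat - u⟫ + ⟪v, u - xhat⟫ ≤ 0 := by linarith
    have hip1 : (⟪z - u, xhat - u⟫ : ℝ) = - ⟪z - u, u - xhat⟫ := by
      rw [← inner_neg_right]; congr 1; abel
    have hkey : 0 ≤ ⟪z - u - a • v, u - xhat⟫ := by
      rw [inner_sub_left, real_inner_smul_left]
      rw [hip1] at hadd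
      have : a * ((1/a) * ⟪z - u, u - xhat⟫) ≥ a * ⟪v, u - xhat⟫ := by
        apply mul_le_mul_of_nonneg_left _ ha1.le
        linarith
      have ha0 : a ≠ 0 := ne_of_gt ha1
      rw [← mul_assoc, mul_one_div, div_self ha0, one_mul] at this
      linarith
    set w : E := u - xhat with hw
    set z2 : E := xhat + a • v with hz2
    have hdec : (⟪z - z2, w⟫ : ℝ) = ⟪z - u - a • v, w⟫ + ‖w‖^2 := by
      rw [← real_inner_self_eq_norm_sq, ← inner_add_left]
      congr 1
      rw [hz2, hw]; abel
    have hbound : ‖w‖^2 ≤ ⟪z - z2, w⟫ := by rw [hdec]; linarith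
    have hcs : (⟪z - z2, w⟫ : ℝ) ≤ ‖z - z2‖ * ‖w‖ := real_inner_le_norm _ _
    have hnorm : ‖w‖^2 ≤ ‖z - z2‖^2 := by
      nlinarith [norm_nonneg w, norm_nonneg (z - z2)]
    have hzz : z - z2 = c - a • D ξ := by
      rw [hz, hz2, hv, hc, hD]
      simp only
      module
    have hexp : ‖z - z2‖^2 = h ξ := by
      rw [hzz, norm_sub_sq_real, real_inner_smul_right, norm_smul, mul_pow]
      simp only [hh, Real.norm_eq_abs, sq_abs]
      ring
    calc ‖s ξ - xhat‖^2 = ‖w‖^2 := by rw [hw, hu]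
      _ ≤ ‖z - z2‖^2 := hnorm
      _ = h ξ := hexp
  -- integrability
  have hDint : Integrable D P := (hGint x hxdom).sub (integrable_const _)
  have hinner : Integrable (fun ξ => (⟪c, D ξ⟫ : ℝ)) P := hDint.const_inner c
  have hDsq_meas : AEStronglyMeasurable (fun ξ => ‖D ξ‖^2) P :=
    (continuous_pow 2).comp_aestronglyMeasurable hDint.aestronglyMeasurable.norm
  have hDsq_int : Integrable (fun ξ => ‖D ξ‖^2) P := by
    refine ⟨hDsq_meas, ?_⟩
    rw [hasFiniteIntegral_iff_ofReal (ae_of_all _ fun _ => sq_nonneg _)]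
    exact lt_of_le_of_lt (hGvar x hxdom) ENNReal.ofReal_lt_top
  have hh_int : Integrable h P :=
    ((integrable_const _).sub (hinner.const_mul (2*a))).add (hDsq_int.const_mul (a^2))
  -- expected values
  have hDzero : ∫ ξ, D ξ ∂P = 0 := by
    rw [hD]
    rw [integral_sub (hGint x hxdom) (integrable_const _), hGunbiased x hxdom,
      integral_const]
    simp
  have hinner_zero : ∫ ξ, (⟪c, D ξ⟫ : ℝ) ∂P = 0 := by
    rw [integral_inner hDint c, hDzero, inner_zero_right]
  have hDsq_bound : ∫ ξ, ‖D ξ‖^2 ∂P ≤ σ^2 := by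
    rw [integral_eq_lintegral_of_nonneg_ae (ae_of_all _ fun _ => sq_nonneg _) hDsq_meas]
    calc (∫⁻ ξ, ENNReal.ofReal (‖D ξ‖^2) ∂P).toReal
        ≤ (ENNReal.ofReal (σ^2)).toReal :=
          ENNReal.toReal_mono ENNReal.ofReal_ne_top (hGvar x hxdom)
      _ = σ^2 := ENNReal.toReal_ofReal (sq_nonneg σ)
  have hh_val : ∫ ξ, h ξ ∂P = ‖c‖^2 + a^2 * ∫ ξ, ‖D ξ‖^2 ∂P := by
    have I1 : Integrable (fun ξ => ‖c‖^2 - 2*a*(⟪c, D ξ⟫:ℝ)) P :=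
      (integrable_const _).sub (hinner.const_mul (2*a))
    have I2 : Integrable (fun ξ => a^2 * ‖D ξ‖^2) P := hDsq_int.const_mul (a^2)
    have J2 : Integrable (fun ξ => 2*a*(⟪c, D ξ⟫:ℝ)) P := hinner.const_mul (2*a)
    rw [hh]
    rw [integral_add I1 I2, integral_sub (integrable_const _) J2,
      integral_const_mul, integral_const_mul, hinner_zero, integral_const]
    simp
  -- norm of c
  have hcnorm : ‖c‖ ≤ (1 - a*(ρb-ρ)) * ‖x - xhat‖ := by
    have h1 : ‖c‖ ≤ ‖(1 - a*ρb) • (x - xhat)‖ + ‖a • (gradient f x - gradient f xhat)‖ :=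
      norm_sub_le _ _
    rw [norm_smul, norm_smul, Real.norm_eq_abs, Real.norm_eq_abs,
      abs_of_nonneg (by linarith : (0:ℝ) ≤ 1 - a*ρb), abs_of_nonneg ha1.le] at h1
    have h2 : a * ‖gradient f x - gradient f xhat‖ ≤ a * (ρ * ‖x - xhat‖) :=
      mul_le_mul_of_nonneg_left (hflip x xhat) ha1.le
    calc ‖c‖ ≤ (1 - a*ρb) * ‖x - xhat‖ + a * (ρ * ‖x - xhat‖) := by linarith
      _ = (1 - a*(ρb-ρ)) * ‖x - xhat‖ := by ring
  have hKbound : ‖c‖^2 ≤ (1 - a*(ρb-ρ)) * ‖x - xhat‖^2 := by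
    have hK0 : 0 ≤ 1 - a*(ρb-ρ) := by nlinarith [mul_nonneg ha1.le hρ]
    have hK1 : 1 - a*(ρb-ρ) ≤ 1 := by nlinarith
    have e1 : ‖c‖^2 ≤ ((1 - a*(ρb-ρ)) * ‖x - xhat‖)^2 :=
      pow_le_pow_left₀ (norm_nonneg c) hcnorm 2
    nlinarith [e1, mul_nonneg (mul_nonneg hK0 (sub_nonneg.mpr hK1)) (sq_nonneg ‖x - xhat‖)]
  -- finish
  have hmono : ∫ ξ, ‖s ξ - xhat‖^2 ∂P ≤ ∫ ξ, h ξ ∂P :=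
    integral_mono_of_nonneg (ae_of_all _ fun ξ => sq_nonneg _) hh_int
      (ae_of_all _ hpt)
  have hfinal : ∫ ξ, h ξ ∂P ≤ ‖c‖^2 + a^2 * σ^2 := by
    rw [hh_val]
    nlinarith [sq_nonneg a]
  calc ∫ ξ, ‖s ξ - xhat‖^2 ∂P ≤ ∫ ξ, h ξ ∂P := hmono
    _ ≤ ‖c‖^2 + a^2 * σ^2 := hfinal
    _ ≤ ‖x - xhat‖^2 + a^2*σ^2 - a*(ρb-ρ)*‖x - xhat‖^2 := by nlinarith [hKbound]
end

section
/- Let f : ℝ^d → ℝ be C¹-smooth with ρ-Lipschitz gradient, r : ℝ^d → ℝ ∪ {+∞} proper closed convex, and set φ = f + r. Let (Ω, F, P) be a probability space and G : ℝ^d × Ω → ℝ^d measurable with ∫ G(x,ξ) dP(ξ) = ∇f(x) and ∫ ‖G(x,ξ) − ∇f(x)‖² dP(ξ) ≤ σ², for all x ∈ dom r. Fix ρ̄ > ρ, α ∈ (0, 1/ρ̄], x ∈ dom r, and set x̂ = prox_{φ/ρ̄}(x); suppose ρ̄(x − x̂) − ∇f(x̂) ∈ ∂r(x̂). Then the proximal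 stochastic gradient step x⁺(ξ) = prox_{αr}(x − αG(x,ξ)) satisfies ∫_Ω φ_{1/ρ̄}(x⁺(ξ)) dP(ξ) ≤ φ_{1/ρ̄}(x) − (α(ρ̄ − ρ)ρ̄/2)‖x − x̂‖² + α²ρ̄σ²/2. -/
open MeasureTheory RealInnerProductSpace

lemma le_of_forall_small {A B C : ℝ} (hC : 0 ≤ C) (h : ∀ t : ℝ, 0 < t → t ≤ 1 → A ≤ B + t * C) :
    A ≤ B := by
  by_contra hlt
  push_neg at hlt
  have hC1 : (0:ℝ) < 2 * (C + 1) := by linarith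
  set t := min 1 ((A - B) / (2 * (C + 1))) with ht
  have ht0 : 0 < t := lt_min one_pos (div_pos (by linarith) hC1)
  have ht1 : t ≤ 1 := min_le_left _ _
  have h1 := h t ht0 ht1
  have htC : t * C ≤ (A - B) / (2 * (C + 1)) * C :=
    mul_le_mul_of_nonneg_right (min_le_right _ _) hC
  have h2 : (A - B) / (2 * (C + 1)) * C < A - B := by
    rw [div_mul_eq_mul_div, div_lt_iff₀ hC1]
    nlinarith
  linarith

lemma ereal_top_add_le {p c : ℝ} {X : EReal} (hX : X ≠ ⊤)
    (h : (p : EReal) + ⊤ + (c : EReal) ≤ X) : False := by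
  rw [EReal.add_top_of_ne_bot (EReal.coe_ne_bot p),
    EReal.top_add_of_ne_bot (EReal.coe_ne_bot c)] at h
  exact hX (top_le_iff.mp h)

lemma ereal_top_add_le' {c : ℝ} {X : EReal} (hX : X ≠ ⊤)
    (h : (⊤ : EReal) + (c : EReal) ≤ X) : False := by
  rw [EReal.top_add_of_ne_bot (EReal.coe_ne_bot c)] at h
  exact hX (top_le_iff.mp h)

lemma descent_lower {E : Type*} [NormedAddCommGroup E] [InnerProductSpace ℝ E] [CompleteSpace E]
    (f : E → ℝ) (hf : ContDiff ℝ 1 f) {ρ : ℝ}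
    (hflip : ∀ u v : E, ‖gradient f u - gradient f v‖ ≤ ρ * ‖u - v‖) (z y : E) :
    f z + ⟪gradient f z, y - z⟫ - ρ / 2 * ‖y - z‖ ^ 2 ≤ f y := by
  set w := y - z with hw
  have hline : ∀ t : ℝ, HasDerivAt (fun t : ℝ => z + t • w) w t := fun t => by
    simpa using ((hasDerivAt_id t).smul_const w).const_add z
  have hfd : ∀ t : ℝ, HasDerivAt (fun t : ℝ => f (z + t • w)) ⟪gradient f (z + t • w), w⟫ t := by
    intro t
    have hd : DifferentiableAt ℝ f (z + t • w) := (hf.differentiable one_ne_zero) _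
    have := hd.hasGradientAt.hasFDerivAt.comp_hasDerivAt t (hline t)
    simp only [InnerProductSpace.toDual_apply_apply] at this
    exact this
  set h : ℝ → ℝ := fun t => f (z + t • w) + ρ * t ^ 2 / 2 * ‖w‖ ^ 2 - t * ⟪gradient f z, w⟫ with hh
  have hhd : ∀ t : ℝ,
      HasDerivAt h (⟪gradient f (z + t • w), w⟫ + ρ * t * ‖w‖ ^ 2 - ⟪gradient f z, w⟫) t := by
    intro t
    have h1 : HasDerivAt (fun t : ℝ => ρ * t ^ 2 / 2 * ‖w‖ ^ 2) (ρ * t * ‖w‖ ^ 2) t := by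
      have h0 : HasDerivAt (fun t : ℝ => t ^ 2) (2 * t) t := by simpa using hasDerivAt_pow 2 t
      have := ((h0.const_mul ρ).div_const 2).mul_const (‖w‖ ^ 2)
      exact this.congr_deriv (by ring)
    have h2 : HasDerivAt (fun t : ℝ => t * ⟪gradient f z, w⟫) ⟪gradient f z, w⟫ t := by
      simpa using (hasDerivAt_id t).mul_const (⟪gradient f z, w⟫ : ℝ)
    exact ((hfd t).add h1).sub h2
  have hmono : MonotoneOn h (Set.Icc 0 1) := by
    apply monotoneOn_of_deriv_nonneg (convex_Icc 0 1)
    · exact Continuous.continuousOn (by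
        have : Continuous h := by
          have := (hf.continuous.comp (by continuity : Continuous fun t : ℝ => z + t • w))
          continuity
        exact this)
    · exact fun t ht => ((hhd t).differentiableAt).differentiableWithinAt
    · intro t ht
      rw [interior_Icc] at ht
      have ht0 : 0 ≤ t := le_of_lt ht.1
      rw [(hhd t).deriv]
      have hcs : |⟪gradient f (z + t • w) - gradient f z, w⟫| ≤ ρ * t * ‖w‖ ^ 2 := by
        calc |⟪gradient f (z + t • w) - gradient f z, w⟫|
            ≤ ‖gradient f (z + t • w) - gradient f z‖ * ‖w‖ := abs_real_inner_le_norm _ _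
          _ ≤ (ρ * ‖(z + t • w) - z‖) * ‖w‖ := by gcongr; exact hflip _ _
          _ = ρ * t * ‖w‖ ^ 2 := by
              simp [norm_smul, abs_of_nonneg ht0]; ring
      have hab := (abs_le.mp hcs).1
      rw [inner_sub_left] at hab
      linarith
  have h01 : h 0 ≤ h 1 := hmono (by simp) (by simp) (by norm_num)
  simp only [hh] at h01
  simp only [zero_smul, add_zero, one_smul] at h01
  have hzw : z + w = y := by simp [hw]
  rw [hzw] at h01
  nlinarith [h01]

set_option maxHeartbeats 1000000

/-- One step of the proximal stochastic gradient method on `φ = f + r` with `f` `C¹`-smooth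
with `ρ`-Lipschitz gradient, `r` proper closed convex, an unbiased stochastic gradient
oracle `G` with variance bound `σ²`, `ρ̄ > ρ`, `α ∈ (0, 1/ρ̄]`, `x̂ = prox_{φ/ρ̄}(x)`, and
`ρ̄(x − x̂) − ∇f(x̂) ∈ ∂r(x̂)`.  The step `x⁺(ξ) = prox_{αr}(x − αG(x,ξ))` decreases the
Moreau envelope `env = φ_{1/ρ̄}` in expectation:
`E[env(x⁺(ξ))] ≤ env(x) − (α(ρ̄ − ρ)ρ̄/2)‖x − x̂‖² + α²ρ̄σ²/2`
(recall `‖∇φ_{1/ρ̄}(x)‖ = ρ̄‖x − x̂‖`). -/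
theorem proximal_stochastic_gradient_envelope_descent
    {E : Type*} [NormedAddCommGroup E] [InnerProductSpace ℝ E] [FiniteDimensional ℝ E]
    [MeasurableSpace E] [BorelSpace E]
    {Ω : Type*} [MeasurableSpace Ω] (P : Measure Ω) [IsProbabilityMeasure P]
    (f : E → ℝ) (hf : ContDiff ℝ 1 f) (ρ : ℝ) (hρ : 0 ≤ ρ)
    (hflip : ∀ u v : E, ‖gradient f u - gradient f v‖ ≤ ρ * ‖u - v‖)
    (r : E → EReal) (hrbot : ∀ y, r y ≠ ⊥) (hrproper : ∃ y, r y ≠ ⊤)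
    (hrlsc : LowerSemicontinuous r) (hrconv : ERealConvexOn Set.univ r)
    (G : E → Ω → E) (hGmeas : Measurable fun p : E × Ω => G p.1 p.2)
    (σ : ℝ)
    (hGint : ∀ z : E, r z ≠ ⊤ → Integrable (G z) P)
    (hGunbiased : ∀ z : E, r z ≠ ⊤ → ∫ ξ, G z ξ ∂P = gradient f z)
    (hGvar : ∀ z : E, r z ≠ ⊤ →
      ∫⁻ ξ, ENNReal.ofReal (‖G z ξ - gradient f z‖ ^ 2) ∂P ≤ ENNReal.ofReal (σ ^ 2))
    (ρb : ℝ) (hρb : ρ < ρb)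
    (a : ℝ) (ha1 : 0 < a) (ha2 : a * ρb ≤ 1)
    (x : E) (hxdom : r x ≠ ⊤)
    (xhat : E)
    (hxhatmin : ∀ y : E,
      (f xhat : EReal) + r xhat + ((ρb / 2 * ‖xhat - x‖ ^ 2 : ℝ) : EReal)
        ≤ (f y : EReal) + r y + ((ρb / 2 * ‖y - x‖ ^ 2 : ℝ) : EReal))
    (hstat : ∀ y : E,
      r xhat + ((⟪ρb • (x - xhat) - gradient f xhat, y - xhat⟫ : ℝ) : EReal) ≤ r y)
    (s : Ω → E)
    (hs : ∀ ξ : Ω, ∀ y : E,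
      r (s ξ) + ((1 / (2 * a) * ‖s ξ - (x - a • G x ξ)‖ ^ 2 : ℝ) : EReal)
        ≤ r y + ((1 / (2 * a) * ‖y - (x - a • G x ξ)‖ ^ 2 : ℝ) : EReal))
    (env : E → ℝ)
    (henv : ∀ z : E,
      (env z : EReal) = ⨅ y : E,
        (f y : EReal) + r y + ((ρb / 2 * ‖y - z‖ ^ 2 : ℝ) : EReal)) :
    ∫ ξ, env (s ξ) ∂P
      ≤ env x - a * (ρb - ρ) * ρb / 2 * ‖x - xhat‖ ^ 2 + a ^ 2 * ρb * σ ^ 2 / 2 := by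
  classical
  -- basic positivity
  have hb0 : (0:ℝ) < ρb := lt_of_le_of_lt hρ hρb
  have hk0 : (0:ℝ) < ρb - ρ := by linarith
  have haρb : 0 ≤ 1 - a * ρb := by linarith
  -- finite values of r
  have hfin : ∀ y : E, r y ≠ ⊤ → r y = (((r y).toReal : ℝ) : EReal) :=
    fun y h => (EReal.coe_toReal h (hrbot y)).symm
  have hxhtop : r xhat ≠ ⊤ := by
    intro h
    have h1 := hxhatmin x
    rw [h, hfin x hxdom] at h1
    exact ereal_top_add_le (by rw [← EReal.coe_add, ← EReal.coe_add]; exact EReal.coe_ne_top _) h1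
  have hstop : ∀ ξ : Ω, r (s ξ) ≠ ⊤ := by
    intro ξ h
    have h1 := hs ξ x
    rw [h, hfin x hxdom] at h1
    exact ereal_top_add_le' (by rw [← EReal.coe_add]; exact EReal.coe_ne_top _) h1
  -- real-valued versions
  have hstatR : ∀ y : E, r y ≠ ⊤ →
      (r xhat).toReal + ⟪ρb • (x - xhat) - gradient f xhat, y - xhat⟫ ≤ (r y).toReal := by
    intro y h
    have h1 := hstat y
    rw [hfin xhat hxhtop, hfin y h] at h1
    exact_mod_cast h1
  have hminR : ∀ y : E, r y ≠ ⊤ →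
      f xhat + (r xhat).toReal + ρb / 2 * ‖xhat - x‖ ^ 2
        ≤ f y + (r y).toReal + ρb / 2 * ‖y - x‖ ^ 2 := by
    intro y h
    have h1 := hxhatmin y
    rw [hfin xhat hxhtop, hfin y h] at h1
    exact_mod_cast h1
  have hsR : ∀ ξ : Ω, ∀ y : E, r y ≠ ⊤ →
      (r (s ξ)).toReal + 1 / (2 * a) * ‖s ξ - (x - a • G x ξ)‖ ^ 2
        ≤ (r y).toReal + 1 / (2 * a) * ‖y - (x - a • G x ξ)‖ ^ 2 := by
    intro ξ y h
    have h1 := hs ξ y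
    rw [hfin (s ξ) (hstop ξ), hfin y h] at h1
    exact_mod_cast h1
  -- the key subgradient inequality at the prox point
  have hcore : ∀ ξ : Ω, ∀ y : E, r y ≠ ⊤ →
      (r (s ξ)).toReal ≤ (r y).toReal
        + (1 / a) * ⟪s ξ - (x - a • G x ξ), y - s ξ⟫ := by
    intro ξ y hy
    apply le_of_forall_small (C := 1 / (2 * a) * ‖y - s ξ‖ ^ 2) (by positivity)
    intro t ht0 ht1
    have hconv := hrconv (s ξ) (Set.mem_univ _) y (Set.mem_univ _) (1 - t) t
      (by linarith) ht0.le (by ring)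
    rw [hfin (s ξ) (hstop ξ), hfin y hy] at hconv
    have hcoe : ((1 - t : ℝ) : EReal) * (((r (s ξ)).toReal : ℝ) : EReal)
        + ((t : ℝ) : EReal) * (((r y).toReal : ℝ) : EReal)
        = (((1 - t) * (r (s ξ)).toReal + t * (r y).toReal : ℝ) : EReal) := by
      push_cast; ring
    rw [hcoe] at hconv
    set yt := (1 - t) • s ξ + t • y with hyt
    have hyttop : r yt ≠ ⊤ := ne_top_of_le_ne_top (EReal.coe_ne_top _) hconv
    have hRyt : (r yt).toReal ≤ (1 - t) * (r (s ξ)).toReal + t * (r y).toReal := by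
      rw [hfin yt hyttop] at hconv
      exact_mod_cast hconv
    have hsyt := hsR ξ yt hyttop
    have hytz : yt - (x - a • G x ξ) = (s ξ - (x - a • G x ξ)) + t • (y - s ξ) := by
      rw [hyt]; module
    have hexp : ‖yt - (x - a • G x ξ)‖ ^ 2 = ‖s ξ - (x - a • G x ξ)‖ ^ 2
        + 2 * (t * ⟪s ξ - (x - a • G x ξ), y - s ξ⟫) + t ^ 2 * ‖y - s ξ‖ ^ 2 := by
      rw [hytz, norm_add_sq_real, inner_smul_right, norm_smul]
      simp [mul_pow, sq_abs]
    rw [hexp] at hsyt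
    have hx1 : 1 / (2 * a) * (‖s ξ - (x - a • G x ξ)‖ ^ 2
        + 2 * (t * ⟪s ξ - (x - a • G x ξ), y - s ξ⟫) + t ^ 2 * ‖y - s ξ‖ ^ 2)
        = 1 / (2 * a) * ‖s ξ - (x - a • G x ξ)‖ ^ 2
          + t * ((1 / a) * ⟪s ξ - (x - a • G x ξ), y - s ξ⟫)
          + t * (t * (1 / (2 * a) * ‖y - s ξ‖ ^ 2)) := by
      field_simp
    rw [hx1] at hsyt
    have h6 : t * (r (s ξ)).toReal ≤ t * ((r y).toReal
        + (1 / a) * ⟪s ξ - (x - a • G x ξ), y - s ξ⟫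
        + t * (1 / (2 * a) * ‖y - s ξ‖ ^ 2)) := by nlinarith [hsyt, hRyt]
    have := (mul_le_mul_iff_right₀ ht0).mp h6
    linarith
  -- firm nonexpansiveness at xhat
  have hfirm : ∀ ξ : Ω, ‖s ξ - xhat‖
      ≤ ‖((1 - a * ρb) • (x - xhat) + a • (gradient f xhat - gradient f x))
          + a • (gradient f x - G x ξ)‖ := by
    intro ξ
    set M : E := ((1 - a * ρb) • (x - xhat) + a • (gradient f xhat - gradient f x))
      + a • (gradient f x - G x ξ) with hM
    have h1 := hcore ξ xhat hxhtop
    have h2 := hstatR (s ξ) (hstop ξ)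
    have hn : xhat - s ξ = -(s ξ - xhat) := by abel
    rw [hn, inner_neg_right] at h1
    have h3 : ⟪ρb • (x - xhat) - gradient f xhat, s ξ - xhat⟫
        + (1 / a) * ⟪s ξ - (x - a • G x ξ), s ξ - xhat⟫ ≤ 0 := by linarith
    have h5 := mul_le_mul_of_nonneg_left h3 ha1.le
    rw [mul_zero, mul_add,
      show a * ((1 / a) * ⟪s ξ - (x - a • G x ξ), s ξ - xhat⟫)
        = ⟪s ξ - (x - a • G x ξ), s ξ - xhat⟫ by field_simp] at h5
    have hMu : M = (s ξ - xhat) - (s ξ - (x - a • G x ξ))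
        - a • (ρb • (x - xhat) - gradient f xhat) := by rw [hM]; module
    have hMin : ⟪M, s ξ - xhat⟫ = ⟪s ξ - xhat, s ξ - xhat⟫
        - ⟪s ξ - (x - a • G x ξ), s ξ - xhat⟫
        - a * ⟪ρb • (x - xhat) - gradient f xhat, s ξ - xhat⟫ := by
      rw [hMu, inner_sub_left, inner_sub_left, real_inner_smul_left]
    have hkey : ⟪s ξ - xhat, s ξ - xhat⟫ ≤ ⟪M, s ξ - xhat⟫ := by
      rw [hMin]; linarith
    rw [real_inner_self_eq_norm_mul_norm] at hkey
    have hcs := real_inner_le_norm M (s ξ - xhat)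
    rcases eq_or_lt_of_le (norm_nonneg (s ξ - xhat)) with h0 | h0
    · rw [← h0]; exact norm_nonneg _
    · exact le_of_mul_le_mul_right (by nlinarith) h0
  -- Lipschitz property of s in terms of G
  have hsLip : ∀ ξ₁ ξ₂ : Ω, ‖s ξ₁ - s ξ₂‖ ≤ a * ‖G x ξ₁ - G x ξ₂‖ := by
    intro ξ₁ ξ₂
    have h1 := hcore ξ₁ (s ξ₂) (hstop ξ₂)
    have h2 := hcore ξ₂ (s ξ₁) (hstop ξ₁)
    have hn : s ξ₂ - s ξ₁ = -(s ξ₁ - s ξ₂) := by abel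
    rw [hn, inner_neg_right] at h1
    have h3 : 0 ≤ (1 / a) * -⟪s ξ₁ - (x - a • G x ξ₁), s ξ₁ - s ξ₂⟫
        + (1 / a) * ⟪s ξ₂ - (x - a • G x ξ₂), s ξ₁ - s ξ₂⟫ := by linarith
    have h5 := mul_le_mul_of_nonneg_left h3 ha1.le
    rw [mul_zero, mul_add,
      show a * ((1 / a) * -⟪s ξ₁ - (x - a • G x ξ₁), s ξ₁ - s ξ₂⟫)
        = -⟪s ξ₁ - (x - a • G x ξ₁), s ξ₁ - s ξ₂⟫ by field_simp <;> ring,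
      show a * ((1 / a) * ⟪s ξ₂ - (x - a • G x ξ₂), s ξ₁ - s ξ₂⟫)
        = ⟪s ξ₂ - (x - a • G x ξ₂), s ξ₁ - s ξ₂⟫ by field_simp <;> ring] at h5
    have hid : (s ξ₂ - (x - a • G x ξ₂)) = (s ξ₁ - (x - a • G x ξ₁))
        - (s ξ₁ - s ξ₂) + a • (G x ξ₂ - G x ξ₁) := by module
    have hIdIn : ⟪s ξ₂ - (x - a • G x ξ₂), s ξ₁ - s ξ₂⟫
        = ⟪s ξ₁ - (x - a • G x ξ₁), s ξ₁ - s ξ₂⟫ - ⟪s ξ₁ - s ξ₂, s ξ₁ - s ξ₂⟫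
          + ⟪a • (G x ξ₂ - G x ξ₁), s ξ₁ - s ξ₂⟫ := by
      rw [hid, inner_add_left, inner_sub_left]
    have hkey : ⟪s ξ₁ - s ξ₂, s ξ₁ - s ξ₂⟫ ≤ ⟪a • (G x ξ₂ - G x ξ₁), s ξ₁ - s ξ₂⟫ := by
      linarith
    rw [real_inner_self_eq_norm_mul_norm] at hkey
    have hcs := real_inner_le_norm (a • (G x ξ₂ - G x ξ₁)) (s ξ₁ - s ξ₂)
    have hnrm : ‖a • (G x ξ₂ - G x ξ₁)‖ = a * ‖G x ξ₁ - G x ξ₂‖ := by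
      rw [norm_smul, norm_sub_rev]; simp [abs_of_pos ha1]
    rw [hnrm] at hcs
    rcases eq_or_lt_of_le (norm_nonneg (s ξ₁ - s ξ₂)) with h0 | h0
    · rw [← h0]; positivity
    · exact le_of_mul_le_mul_right (by nlinarith) h0
  -- upper bound on env
  have henvle : ∀ z : E, ∀ y : E, r y ≠ ⊤ →
      env z ≤ f y + (r y).toReal + ρb / 2 * ‖y - z‖ ^ 2 := by
    intro z y hy
    have h1 : (env z : EReal) ≤ (f y : EReal) + r y + ((ρb / 2 * ‖y - z‖ ^ 2 : ℝ) : EReal) := by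
      rw [henv z]; exact iInf_le _ y
    rw [hfin y hy] at h1
    exact_mod_cast h1
  -- value of env at x
  have henvx : env x = f xhat + (r xhat).toReal + ρb / 2 * ‖xhat - x‖ ^ 2 := by
    refine le_antisymm (henvle x xhat hxhtop) ?_
    have h1 : ((f xhat + (r xhat).toReal + ρb / 2 * ‖xhat - x‖ ^ 2 : ℝ) : EReal)
        ≤ (env x : EReal) := by
      rw [henv x]
      refine le_iInf fun y => le_trans (le_of_eq ?_) (hxhatmin y)
      rw [show ((f xhat + (r xhat).toReal + ρb / 2 * ‖xhat - x‖ ^ 2 : ℝ) : EReal)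
          = (f xhat : EReal) + (((r xhat).toReal : ℝ) : EReal)
            + ((ρb / 2 * ‖xhat - x‖ ^ 2 : ℝ) : EReal) by push_cast; ring,
        ← hfin xhat hxhtop]
    exact_mod_cast h1
  -- lower bound on env
  have henvlow : ∀ z : E,
      f xhat + (r xhat).toReal - ρb ^ 2 / (2 * (ρb - ρ)) * ‖x - z‖ ^ 2 ≤ env z := by
    intro z
    have h1 : ((f xhat + (r xhat).toReal - ρb ^ 2 / (2 * (ρb - ρ)) * ‖x - z‖ ^ 2 : ℝ) : EReal)
        ≤ (env z : EReal) := by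
      rw [henv z]
      refine le_iInf fun y => ?_
      by_cases hy : r y = ⊤
      · rw [hy, EReal.add_top_of_ne_bot (EReal.coe_ne_bot _),
          EReal.top_add_of_ne_bot (EReal.coe_ne_bot _)]
        exact le_top
      · rw [hfin y hy]
        have hd := descent_lower f hf hflip xhat y
        have hst := hstatR y hy
        have hiv : ⟪gradient f xhat, y - xhat⟫
            + ⟪ρb • (x - xhat) - gradient f xhat, y - xhat⟫ = ρb * ⟪x - xhat, y - xhat⟫ := by
          rw [← inner_add_left,
            show gradient f xhat + (ρb • (x - xhat) - gradient f xhat) = ρb • (x - xhat) by module,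
            real_inner_smul_left]
        have hsplit2 : ρb / 2 * ‖y - z‖ ^ 2 = ρb / 2 * ‖y - xhat‖ ^ 2
            + ρb * ⟪y - xhat, xhat - z⟫ + ρb / 2 * ‖xhat - z‖ ^ 2 := by
          rw [show y - z = (y - xhat) + (xhat - z) by abel, norm_add_sq_real]
          ring
        have hS : ⟪x - xhat, y - xhat⟫ + ⟪y - xhat, xhat - z⟫ = ⟪x - z, y - xhat⟫ := by
          rw [real_inner_comm (y - xhat) (x - z), real_inner_comm (y - xhat) (x - xhat),
            ← inner_add_right]
          congr 1
          abel
        have hS2 : ρb * ⟪x - xhat, y - xhat⟫ + ρb * ⟪y - xhat, xhat - z⟫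
            = ρb * ⟪x - z, y - xhat⟫ := by rw [← mul_add, hS]
        have hCSb : -(ρb * (‖x - z‖ * ‖y - xhat‖)) ≤ ρb * ⟪x - z, y - xhat⟫ := by
          have h := (abs_le.mp (abs_real_inner_le_norm (x - z) (y - xhat))).1
          have := mul_le_mul_of_nonneg_left h hb0.le
          linarith
        have hq : 0 ≤ (ρb - ρ) / 2 * ‖y - xhat‖ ^ 2 - ρb * (‖x - z‖ * ‖y - xhat‖)
            + ρb ^ 2 / (2 * (ρb - ρ)) * ‖x - z‖ ^ 2 := by
          have heq : (ρb - ρ) / 2 * ‖y - xhat‖ ^ 2 - ρb * (‖x - z‖ * ‖y - xhat‖)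
              + ρb ^ 2 / (2 * (ρb - ρ)) * ‖x - z‖ ^ 2
              = ((ρb - ρ) * ‖y - xhat‖ - ρb * ‖x - z‖) ^ 2 / (2 * (ρb - ρ)) := by
            field_simp
            ring
          rw [heq]
          exact div_nonneg (sq_nonneg _) (by linarith)
        have hzn : 0 ≤ ρb / 2 * ‖xhat - z‖ ^ 2 := by positivity
        have hre : f xhat + (r xhat).toReal - ρb ^ 2 / (2 * (ρb - ρ)) * ‖x - z‖ ^ 2
            ≤ f y + (r y).toReal + ρb / 2 * ‖y - z‖ ^ 2 := by
          linarith [hd, hst, hiv, hsplit2, hS2, hCSb, hq, hzn]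
        exact_mod_cast hre
    exact_mod_cast h1
  -- measurability of s
  have hgmeas : Measurable (G x) := hGmeas.comp measurable_prodMk_left
  have hsmeas : Measurable s := by
    set b := stdOrthonormalBasis ℝ E with hb
    have hwd : ∀ ξ₁ ξ₂ : Ω, G x ξ₁ = G x ξ₂ → s ξ₁ = s ξ₂ := by
      intro ξ₁ ξ₂ h
      have h1 := hsLip ξ₁ ξ₂
      rw [h] at h1
      have h0 : ‖s ξ₁ - s ξ₂‖ ≤ 0 := by simpa using h1
      exact sub_eq_zero.mp (norm_le_zero_iff.mp h0)
    have hcoord : ∀ i, Measurable fun ξ => ⟪b i, s ξ⟫ := by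
      intro i
      set F : E → ℝ := fun w => if h : ∃ ξ, G x ξ = w then ⟪b i, s h.choose⟫ else 0 with hF
      have hFeq : ∀ ξ, F (G x ξ) = ⟪b i, s ξ⟫ := by
        intro ξ
        have hex : ∃ ξ', G x ξ' = G x ξ := ⟨ξ, rfl⟩
        rw [hF]
        simp only [dif_pos hex]
        rw [hwd hex.choose ξ hex.choose_spec]
      have hFlip : LipschitzOnWith (Real.toNNReal a) F (Set.range (G x)) := by
        apply LipschitzOnWith.of_dist_le_mul
        rintro w₁ ⟨ξ₁, rfl⟩ w₂ ⟨ξ₂, rfl⟩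
        rw [hFeq ξ₁, hFeq ξ₂, Real.dist_eq, dist_eq_norm]
        have hsub : ⟪b i, s ξ₁⟫ - ⟪b i, s ξ₂⟫ = ⟪b i, s ξ₁ - s ξ₂⟫ := (inner_sub_right _ _ _).symm
        rw [hsub]
        calc |⟪b i, s ξ₁ - s ξ₂⟫| ≤ ‖b i‖ * ‖s ξ₁ - s ξ₂‖ := abs_real_inner_le_norm _ _
          _ ≤ 1 * (a * ‖G x ξ₁ - G x ξ₂‖) := by
              rw [b.orthonormal.1 i]
              have := hsLip ξ₁ ξ₂
              simpa using this
          _ = (Real.toNNReal a : ℝ) * ‖G x ξ₁ - G x ξ₂‖ := by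
              rw [Real.coe_toNNReal a ha1.le]; ring
      obtain ⟨F', hF'lip, hF'eq⟩ := hFlip.extend_real
      have heq : (fun ξ => ⟪b i, s ξ⟫) = fun ξ => F' (G x ξ) := by
        funext ξ
        rw [← hFeq ξ, hF'eq (Set.mem_range_self ξ)]
      rw [heq]
      exact (hF'lip.continuous.measurable).comp hgmeas
    have hsum : s = fun ξ => ∑ i, ⟪b i, s ξ⟫ • b i := by
      funext ξ
      simpa [b.repr_apply_apply] using (b.sum_repr' (s ξ)).symm
    rw [hsum]
    exact Finset.measurable_sum _ fun i _ => (hcoord i).smul_const (b i)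
  -- measurability of env
  have henvmeas : Measurable env := by
    have husc : UpperSemicontinuous env := by
      intro z₀ c hc
      have h1 : (env z₀ : EReal) < (c : EReal) := by exact_mod_cast hc
      rw [henv z₀] at h1
      obtain ⟨y, hy⟩ := iInf_lt_iff.mp h1
      have hytop : r y ≠ ⊤ := by
        intro h
        rw [h, EReal.add_top_of_ne_bot (EReal.coe_ne_bot _),
          EReal.top_add_of_ne_bot (EReal.coe_ne_bot _)] at hy
        exact absurd hy (by simp)
      rw [hfin y hytop] at hy
      have hyR : f y + (r y).toReal + ρb / 2 * ‖y - z₀‖ ^ 2 < c := by exact_mod_cast hy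
      have hcont : Continuous fun z : E => f y + (r y).toReal + ρb / 2 * ‖y - z‖ ^ 2 :=
        continuous_const.add (continuous_const.mul ((continuous_const.sub continuous_id).norm.pow 2))
      have hev : ∀ᶠ z in nhds z₀, f y + (r y).toReal + ρb / 2 * ‖y - z‖ ^ 2 < c :=
        (hcont.tendsto z₀).eventually_lt_const hyR
      exact hev.mono fun z hz => lt_of_le_of_lt (henvle z y hytop) hz
    exact husc.measurable
  -- integrability facts
  have hΔmeas : Measurable (fun ξ => gradient f x - G x ξ) := measurable_const.sub hgmeas
  have hΔint : Integrable (fun ξ => gradient f x - G x ξ) P :=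
    (integrable_const _).sub (hGint x hxdom)
  have hΔ0 : ∫ ξ, (gradient f x - G x ξ) ∂P = 0 := by
    rw [integral_sub (integrable_const _) (hGint x hxdom), integral_const, hGunbiased x hxdom]
    simp
  have hΔrev : (fun ξ => ENNReal.ofReal (‖gradient f x - G x ξ‖ ^ 2))
      = fun ξ => ENNReal.ofReal (‖G x ξ - gradient f x‖ ^ 2) := by
    funext ξ; rw [norm_sub_rev]
  have hΔsqint : Integrable (fun ξ => ‖gradient f x - G x ξ‖ ^ 2) P := by
    refine ⟨(hΔmeas.norm.pow_const 2).aestronglyMeasurable, ?_⟩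
    rw [hasFiniteIntegral_iff_ofReal (Filter.Eventually.of_forall fun ξ => by positivity)]
    rw [hΔrev]
    exact lt_of_le_of_lt (hGvar x hxdom) ENNReal.ofReal_lt_top
  have hΔsq : ∫ ξ, ‖gradient f x - G x ξ‖ ^ 2 ∂P ≤ σ ^ 2 := by
    rw [integral_eq_lintegral_of_nonneg_ae (Filter.Eventually.of_forall fun ξ => by positivity)
      (hΔmeas.norm.pow_const 2).aestronglyMeasurable, hΔrev]
    calc (∫⁻ ξ, ENNReal.ofReal (‖G x ξ - gradient f x‖ ^ 2) ∂P).toReal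
        ≤ (ENNReal.ofReal (σ ^ 2)).toReal :=
          ENNReal.toReal_mono ENNReal.ofReal_ne_top (hGvar x hxdom)
      _ = σ ^ 2 := ENNReal.toReal_ofReal (by positivity)
  -- pointwise bound and integrability of env ∘ s
  have hpoint : ∀ ξ : Ω, env (s ξ) ≤ env x + ρb / 2 *
      (‖(1 - a * ρb) • (x - xhat) + a • (gradient f xhat - gradient f x)‖ ^ 2
        + 2 * (a * ⟪(1 - a * ρb) • (x - xhat) + a • (gradient f xhat - gradient f x),
            gradient f x - G x ξ⟫)
        + a ^ 2 * ‖gradient f x - G x ξ‖ ^ 2 - ‖xhat - x‖ ^ 2) := by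
    intro ξ
    have h1 := henvle (s ξ) xhat hxhtop
    rw [norm_sub_rev xhat (s ξ)] at h1
    have h2 := hfirm ξ
    have hexp : ‖((1 - a * ρb) • (x - xhat) + a • (gradient f xhat - gradient f x))
          + a • (gradient f x - G x ξ)‖ ^ 2
        = ‖(1 - a * ρb) • (x - xhat) + a • (gradient f xhat - gradient f x)‖ ^ 2
          + 2 * (a * ⟪(1 - a * ρb) • (x - xhat) + a • (gradient f xhat - gradient f x),
              gradient f x - G x ξ⟫)
          + a ^ 2 * ‖gradient f x - G x ξ‖ ^ 2 := by
      rw [norm_add_sq_real, inner_smul_right, norm_smul]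
      simp [mul_pow, sq_abs]
    have h3 : ρb / 2 * ‖s ξ - xhat‖ ^ 2
        ≤ ρb / 2 * (‖(1 - a * ρb) • (x - xhat) + a • (gradient f xhat - gradient f x)‖ ^ 2
          + 2 * (a * ⟪(1 - a * ρb) • (x - xhat) + a • (gradient f xhat - gradient f x),
              gradient f x - G x ξ⟫)
          + a ^ 2 * ‖gradient f x - G x ξ‖ ^ 2) := by
      rw [← hexp]
      exact mul_le_mul_of_nonneg_left (pow_le_pow_left₀ (norm_nonneg _) h2 2) (by positivity)
    linarith [h1, h3, henvx]
  have henvsint : Integrable (fun ξ => env (s ξ)) P := by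
    obtain ⟨c3, hc3def⟩ : ∃ c3 : ℝ, c3 = ρb ^ 2 / (2 * (ρb - ρ)) := ⟨_, rfl⟩
    have hc3 : 0 ≤ c3 := by rw [hc3def]; positivity
    obtain ⟨m, hmdef⟩ : ∃ m : E,
        m = (1 - a * ρb) • (x - xhat) + a • (gradient f xhat - gradient f x) := ⟨_, rfl⟩
    have hgint : Integrable (fun ξ => |f xhat + (r xhat).toReal|
        + ρb / 2 * (‖m‖ + a * ‖gradient f x - G x ξ‖) ^ 2
        + c3 * (‖x - xhat‖ + (‖m‖ + a * ‖gradient f x - G x ξ‖)) ^ 2) P := by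
      have e1 : (fun ξ => |f xhat + (r xhat).toReal|
          + ρb / 2 * (‖m‖ + a * ‖gradient f x - G x ξ‖) ^ 2
          + c3 * (‖x - xhat‖ + (‖m‖ + a * ‖gradient f x - G x ξ‖)) ^ 2)
          = fun ξ => (|f xhat + (r xhat).toReal| + ρb / 2 * ‖m‖ ^ 2
              + c3 * (‖x - xhat‖ + ‖m‖) ^ 2)
            + (ρb * ‖m‖ * a + c3 * (2 * (‖x - xhat‖ + ‖m‖) * a)) * ‖gradient f x - G x ξ‖
            + (ρb / 2 * a ^ 2 + c3 * a ^ 2) * ‖gradient f x - G x ξ‖ ^ 2 := by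
        funext ξ; ring
      rw [e1]
      exact ((integrable_const _).add (hΔint.norm.const_mul _)).add (hΔsqint.const_mul _)
    refine hgint.mono' ((henvmeas.comp hsmeas).aestronglyMeasurable) ?_
    refine Filter.Eventually.of_forall fun ξ => ?_
    obtain ⟨B, hBdef⟩ : ∃ B : ℝ, B = ‖m‖ + a * ‖gradient f x - G x ξ‖ := ⟨_, rfl⟩
    have hB0 : 0 ≤ B := by rw [hBdef]; positivity
    have hsB : ‖s ξ - xhat‖ ≤ B := by
      rw [hBdef, hmdef]
      refine (hfirm ξ).trans ?_
      refine (norm_add_le _ _).trans ?_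
      have e2 : ‖a • (gradient f x - G x ξ)‖ = a * ‖gradient f x - G x ξ‖ := by
        rw [norm_smul, Real.norm_eq_abs, abs_of_pos ha1]
      rw [e2]
    have hxsB : ‖x - s ξ‖ ≤ ‖x - xhat‖ + B := by
      have hid : x - s ξ = (x - xhat) - (s ξ - xhat) := by abel
      rw [hid]
      exact (norm_sub_le _ _).trans (by linarith)
    have hup : env (s ξ) ≤ f xhat + (r xhat).toReal + ρb / 2 * B ^ 2 := by
      have h1 := henvle (s ξ) xhat hxhtop
      rw [norm_sub_rev xhat (s ξ)] at h1
      have h2 : ρb / 2 * ‖s ξ - xhat‖ ^ 2 ≤ ρb / 2 * B ^ 2 :=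
        mul_le_mul_of_nonneg_left (pow_le_pow_left₀ (norm_nonneg _) hsB 2) (by positivity)
      linarith
    have hlo : f xhat + (r xhat).toReal - c3 * (‖x - xhat‖ + B) ^ 2 ≤ env (s ξ) := by
      have h1 := henvlow (s ξ)
      rw [← hc3def] at h1
      have h2 : c3 * ‖x - s ξ‖ ^ 2 ≤ c3 * (‖x - xhat‖ + B) ^ 2 :=
        mul_le_mul_of_nonneg_left (pow_le_pow_left₀ (norm_nonneg _) hxsB 2) hc3
      linarith
    have hgoal : |env (s ξ)| ≤ |f xhat + (r xhat).toReal| + ρb / 2 * B ^ 2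
        + c3 * (‖x - xhat‖ + B) ^ 2 := by
      rw [abs_le]
      constructor
      · have h3 := neg_abs_le (f xhat + (r xhat).toReal)
        have hq : 0 ≤ ρb / 2 * B ^ 2 := by positivity
        linarith
      · have h3 := le_abs_self (f xhat + (r xhat).toReal)
        have hq : 0 ≤ c3 * (‖x - xhat‖ + B) ^ 2 := by positivity
        linarith
    rw [Real.norm_eq_abs]
    calc |env (s ξ)| ≤ _ := hgoal
      _ = |f xhat + (r xhat).toReal|
          + ρb / 2 * (‖m‖ + a * ‖gradient f x - G x ξ‖) ^ 2
          + c3 * (‖x - xhat‖ + (‖m‖ + a * ‖gradient f x - G x ξ‖)) ^ 2 := by rw [hBdef]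
  -- conclusion
  obtain ⟨m, hmdef⟩ : ∃ m : E,
      m = (1 - a * ρb) • (x - xhat) + a • (gradient f xhat - gradient f x) := ⟨_, rfl⟩
  have hIint : Integrable (fun ξ => ⟪m, gradient f x - G x ξ⟫) P :=
    (innerSL ℝ m).integrable_comp hΔint
  have hI0 : ∫ ξ, ⟪m, gradient f x - G x ξ⟫ ∂P = 0 := by
    have h := (innerSL ℝ m).integral_comp_comm hΔint
    rw [hΔ0] at h
    simpa using h
  have hle : ∀ ξ : Ω, env (s ξ) ≤ (env x + ρb / 2 * (‖m‖ ^ 2 - ‖xhat - x‖ ^ 2))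
      + (ρb * a) * ⟪m, gradient f x - G x ξ⟫
      + (ρb / 2 * a ^ 2) * ‖gradient f x - G x ξ‖ ^ 2 :=
    fun ξ => by
      have h1 := hpoint ξ
      rw [← hmdef] at h1
      exact h1.trans (le_of_eq (by ring))
  have hUint : Integrable (fun ξ => (env x + ρb / 2 * (‖m‖ ^ 2 - ‖xhat - x‖ ^ 2))
      + (ρb * a) * ⟪m, gradient f x - G x ξ⟫
      + (ρb / 2 * a ^ 2) * ‖gradient f x - G x ξ‖ ^ 2) P :=
    ((integrable_const _).add (hIint.const_mul _)).add (hΔsqint.const_mul _)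
  have hmono := integral_mono henvsint hUint hle
  have hUval : ∫ ξ, ((env x + ρb / 2 * (‖m‖ ^ 2 - ‖xhat - x‖ ^ 2))
      + (ρb * a) * ⟪m, gradient f x - G x ξ⟫
      + (ρb / 2 * a ^ 2) * ‖gradient f x - G x ξ‖ ^ 2) ∂P
      = (env x + ρb / 2 * (‖m‖ ^ 2 - ‖xhat - x‖ ^ 2))
        + (ρb * a) * (∫ ξ, ⟪m, gradient f x - G x ξ⟫ ∂P)
        + (ρb / 2 * a ^ 2) * (∫ ξ, ‖gradient f x - G x ξ‖ ^ 2 ∂P) := by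
    have i0 : Integrable (fun _ : Ω => env x + ρb / 2 * (‖m‖ ^ 2 - ‖xhat - x‖ ^ 2)) P :=
      integrable_const _
    have i1 : Integrable (fun ξ : Ω => (ρb * a) * ⟪m, gradient f x - G x ξ⟫) P :=
      hIint.const_mul _
    have i2 : Integrable (fun ξ : Ω => (ρb / 2 * a ^ 2) * ‖gradient f x - G x ξ‖ ^ 2) P :=
      hΔsqint.const_mul _
    have i01 : Integrable (fun ξ : Ω => (env x + ρb / 2 * (‖m‖ ^ 2 - ‖xhat - x‖ ^ 2))
        + (ρb * a) * ⟪m, gradient f x - G x ξ⟫) P := i0.add i1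
    simp only [integral_add i01 i2, integral_add i0 i1, integral_const_mul, integral_const,
      measure_univ, probReal_univ, ENNReal.toReal_one, smul_eq_mul, one_mul]
  rw [hUval, hI0] at hmono
  -- bound on ‖m‖
  have hmle : ‖m‖ ≤ (1 - a * (ρb - ρ)) * ‖x - xhat‖ := by
    rw [hmdef]
    refine (norm_add_le _ _).trans ?_
    have e1 : ‖(1 - a * ρb) • (x - xhat)‖ = (1 - a * ρb) * ‖x - xhat‖ := by
      rw [norm_smul, Real.norm_eq_abs, abs_of_nonneg haρb]
    have e2 : ‖a • (gradient f xhat - gradient f x)‖ ≤ a * (ρ * ‖x - xhat‖) := by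
      rw [norm_smul, Real.norm_eq_abs, abs_of_pos ha1]
      have h := hflip xhat x
      rw [norm_sub_rev xhat x] at h
      exact mul_le_mul_of_nonneg_left h ha1.le
    rw [e1]
    nlinarith [e2]
  have hak1 : a * (ρb - ρ) ≤ 1 := by nlinarith
  have hak0 : 0 ≤ a * (ρb - ρ) := by positivity
  have hmsq : ‖m‖ ^ 2 ≤ (1 - a * (ρb - ρ)) ^ 2 * ‖x - xhat‖ ^ 2 := by
    rw [← mul_pow]
    exact pow_le_pow_left₀ (norm_nonneg _) hmle 2
  have hsq : (1 - a * (ρb - ρ)) ^ 2 ≤ 1 - a * (ρb - ρ) := by nlinarith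
  have hmsq2 : ‖m‖ ^ 2 ≤ (1 - a * (ρb - ρ)) * ‖x - xhat‖ ^ 2 :=
    hmsq.trans (mul_le_mul_of_nonneg_right hsq (sq_nonneg _))
  have hD : ‖xhat - x‖ = ‖x - xhat‖ := norm_sub_rev _ _
  have hvar : ρb / 2 * a ^ 2 * (∫ ξ, ‖gradient f x - G x ξ‖ ^ 2 ∂P)
      ≤ ρb / 2 * a ^ 2 * σ ^ 2 := mul_le_mul_of_nonneg_left hΔsq (by positivity)
  have hmfinal : ρb / 2 * (‖m‖ ^ 2 - ‖xhat - x‖ ^ 2)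
      ≤ -(a * (ρb - ρ) * ρb / 2 * ‖x - xhat‖ ^ 2) := by
    rw [hD]
    have h2 : ‖m‖ ^ 2 - ‖x - xhat‖ ^ 2 ≤ -(a * (ρb - ρ) * ‖x - xhat‖ ^ 2) := by
      nlinarith [hmsq2]
    nlinarith [h2, hb0.le, mul_le_mul_of_nonneg_left h2 (le_of_lt (half_pos hb0))]
  calc ∫ ξ, env (s ξ) ∂P ≤ _ := hmono
    _ ≤ env x - a * (ρb - ρ) * ρb / 2 * ‖x - xhat‖ ^ 2 + a ^ 2 * ρb * σ ^ 2 / 2 := by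
      nlinarith [hmfinal, hvar]
end

section
/- Let r : ℝ^d → ℝ ∪ {+∞} be proper and closed, f : ℝ^d → ℝ locally Lipschitz, U ⊆ ℝ^d an open convex set containing dom r, and (Ω, F, P) a probability space. Suppose a measurable stochastic one-sided model (x, y, ξ) ↦ f_x(y, ξ) on U × U × Ω satisfies: (B2) ∫ f_x(x,ξ) dP(ξ) = f(x) for all x ∈ U and ∫ (f_x(y,ξ) − f(y)) dP(ξ) ≤ (τ/2)‖y − x‖² for all x, y ∈ U; (B3) for every x ∈ U and P-a.e. ξ, the function f_x(·,ξ) + r(·) is η-weakly convex; and (B4) there is a measurable L : Ω → ℝ₊ with √(∫ L(ξ)² dP(ξ)) ≤ 𝖫 such that f_x(x,ξ) − f_x(y,ξ) ≤ L(ξ)‖x − y‖ for all x, y ∈ U and P-a.e. ξ. Then: (i) the function φ = f + r is (τ + η)-weakly convex; and (ii) f is 𝖫-Lipschitz on U, i.e., |f(x) − f(y)| ≤ 𝖫‖x − y‖ for all x, y ∈ U. -/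
open MeasureTheory RealInnerProductSpace

/-- telescoping bound -/
lemma telescope_sub_le (g : ℕ → ℝ) (n : ℕ) (C : ℝ) (h : ∀ i < n, g i - g (i + 1) ≤ C) :
    g 0 - g n ≤ n * C := by
  calc g 0 - g n = ∑ i ∈ Finset.range n, (g i - g (i + 1)) := (Finset.sum_range_sub' g n).symm
    _ ≤ ∑ _i ∈ Finset.range n, C :=
        Finset.sum_le_sum fun i hi => h i (Finset.mem_range.1 hi)
    _ = n * C := by simp [mul_comm]

/-- Lemma 4.1 of Davis–Drusvyatskiy: under the stochastic one-sided model assumptions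
(B2) one-sided accuracy, (B3) `η`-weak convexity of the models `f_x(·,ξ) + r`, and
(B4) the Lipschitz property with `√E[L(ξ)²] ≤ 𝖫`, the function `φ = f + r` is
`(τ + η)`-weakly convex and `f` is `𝖫`-Lipschitz on `U`. -/
theorem one_sided_model_weak_convexity_and_lipschitz
    {E : Type*} [NormedAddCommGroup E] [InnerProductSpace ℝ E] [FiniteDimensional ℝ E]
    [MeasurableSpace E] [BorelSpace E]
    {Ω : Type*} [MeasurableSpace Ω] (P : Measure Ω) [IsProbabilityMeasure P]
    (r : E → EReal) (hrbot : ∀ y, r y ≠ ⊥) (hrproper : ∃ y, r y ≠ ⊤)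
    (hrlsc : LowerSemicontinuous r)
    (f : E → ℝ) (hfll : LocallyLipschitz f)
    (U : Set E) (hUopen : IsOpen U) (hUconv : Convex ℝ U)
    (hUdom : {y : E | r y ≠ ⊤} ⊆ U)
    (F : E → E → Ω → ℝ)
    (hFmeas : Measurable fun p : E × E × Ω => F p.1 p.2.1 p.2.2)
    (τ η LL : ℝ) (hLL : 0 ≤ LL)
    (hFint : ∀ x ∈ U, ∀ y ∈ U, Integrable (fun ξ => F x y ξ) P)
    (hB2center : ∀ x ∈ U, ∫ ξ, F x x ξ ∂P = f x)
    (hB2acc : ∀ x ∈ U, ∀ y ∈ U, ∫ ξ, (F x y ξ - f y) ∂P ≤ τ / 2 * ‖y - x‖ ^ 2)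
    (hB3 : ∀ x ∈ U, ∀ᵐ ξ ∂P, ERealConvexOn U
      (fun y => (F x y ξ : EReal) + r y + ((η / 2 * ‖y‖ ^ 2 : ℝ) : EReal)))
    (L : Ω → ℝ) (hLmeas : Measurable L) (hLnn : ∀ ξ, 0 ≤ L ξ)
    (hLmom : ∫⁻ ξ, ENNReal.ofReal (L ξ ^ 2) ∂P ≤ ENNReal.ofReal (LL ^ 2))
    (hB4 : ∀ x ∈ U, ∀ y ∈ U, ∀ᵐ ξ ∂P, F x x ξ - F x y ξ ≤ L ξ * ‖x - y‖) :
    ERealConvexOn Set.univ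
      (fun y => (f y : EReal) + r y + (((τ + η) / 2 * ‖y‖ ^ 2 : ℝ) : EReal)) ∧
    ∀ x ∈ U, ∀ y ∈ U, |f x - f y| ≤ LL * ‖x - y‖ := by
  -- L has mean at most LL
  have hL1 : ∫⁻ ξ, ENNReal.ofReal (L ξ) ∂P ≤ ENNReal.ofReal LL := by
    have hconj : Real.HolderConjugate 2 2 := by constructor <;> norm_num
    have hmeas : AEMeasurable (fun ξ => ENNReal.ofReal (L ξ)) P :=
      (ENNReal.measurable_ofReal.comp hLmeas).aemeasurable
    have hH := ENNReal.lintegral_mul_le_Lp_mul_Lq P hconj hmeas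
      (aemeasurable_const (b := (1 : ENNReal)))
    simp only [Pi.mul_apply, mul_one, ENNReal.one_rpow, lintegral_const, measure_univ,
      one_mul, ENNReal.one_rpow] at hH
    have h2 : ∀ ξ, (ENNReal.ofReal (L ξ)) ^ (2 : ℝ) = ENNReal.ofReal (L ξ ^ 2) := by
      intro ξ
      rw [show ((2 : ℝ) = ((2 : ℕ) : ℝ)) by norm_num, ENNReal.rpow_natCast,
        ENNReal.ofReal_pow (hLnn ξ)]
    simp only [h2] at hH
    calc ∫⁻ ξ, ENNReal.ofReal (L ξ) ∂P
        ≤ (∫⁻ ξ, ENNReal.ofReal (L ξ ^ 2) ∂P) ^ (1 / 2 : ℝ) := hH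
      _ ≤ (ENNReal.ofReal (LL ^ 2)) ^ (1 / 2 : ℝ) :=
          ENNReal.rpow_le_rpow hLmom (by norm_num)
      _ = ENNReal.ofReal LL := by
          rw [ENNReal.ofReal_pow hLL, show ((ENNReal.ofReal LL) ^ (2:ℕ) = (ENNReal.ofReal LL) ^ ((2:ℕ):ℝ)) from (ENNReal.rpow_natCast _ 2).symm,
            ← ENNReal.rpow_mul]
          norm_num
  have hLint : Integrable L P := by
    refine ⟨hLmeas.aestronglyMeasurable, ?_⟩
    rw [hasFiniteIntegral_iff_ofReal (Filter.Eventually.of_forall hLnn)]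
    exact lt_of_le_of_lt hL1 ENNReal.ofReal_lt_top
  have hLmean : ∫ ξ, L ξ ∂P ≤ LL := by
    rw [integral_eq_lintegral_of_nonneg_ae (Filter.Eventually.of_forall hLnn)
      hLmeas.aestronglyMeasurable]
    calc (∫⁻ ξ, ENNReal.ofReal (L ξ) ∂P).toReal
        ≤ (ENNReal.ofReal LL).toReal := ENNReal.toReal_mono ENNReal.ofReal_ne_top hL1
      _ = LL := ENNReal.toReal_ofReal hLL
  -- base Lipschitz-type bound
  have hbase : ∀ u ∈ U, ∀ v ∈ U, f u - f v ≤ LL * ‖u - v‖ + τ / 2 * ‖u - v‖ ^ 2 := by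
    intro u hu v hv
    have h1 : ∫ ξ, (F u u ξ - F u v ξ) ∂P ≤ ∫ ξ, L ξ * ‖u - v‖ ∂P :=
      integral_mono_ae ((hFint u hu u hu).sub (hFint u hu v hv)) (hLint.mul_const _)
        (hB4 u hu v hv)
    rw [integral_sub (hFint u hu u hu) (hFint u hu v hv), integral_mul_const,
      hB2center u hu] at h1
    have h2 := hB2acc u hu v hv
    rw [integral_sub (hFint u hu v hv) (integrable_const _), integral_const, probReal_univ,
      one_smul, norm_sub_rev] at h2
    have hLm : (∫ ξ, L ξ ∂P) * ‖u - v‖ ≤ LL * ‖u - v‖ :=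
      mul_le_mul_of_nonneg_right hLmean (norm_nonneg _)
    linarith
  -- one-sided Lipschitz bound via telescoping
  have hone : ∀ x ∈ U, ∀ y ∈ U, f x - f y ≤ LL * ‖x - y‖ := by
    intro x hx y hy
    set d : ℝ := ‖x - y‖ with hd
    refine le_of_forall_pos_le_add fun ε hε => ?_
    set c : ℝ := max (τ / 2 * d ^ 2) 0 with hc
    have hc0 : 0 ≤ c := le_max_right _ _
    obtain ⟨n, hn⟩ := exists_nat_gt (c / ε)
    have hN : (0 : ℝ) < n := lt_of_le_of_lt (div_nonneg hc0 hε.le) hn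
    set N : ℝ := (n : ℝ) with hNdef
    set p : ℕ → E := fun i => x + ((i : ℝ) / N) • (y - x) with hp
    have hmem : ∀ i : ℕ, i ≤ n → p i ∈ U := by
      intro i hi
      have h1 : p i = (1 - (i : ℝ) / N) • x + ((i : ℝ) / N) • y := by
        rw [hp]; module
      rw [h1]
      refine hUconv hx hy ?_ (div_nonneg (Nat.cast_nonneg i) (Nat.cast_nonneg n)) (by ring)
      have : (i : ℝ) ≤ N := by rw [hNdef]; exact_mod_cast hi
      have := div_le_one_of_le₀ this hN.le
      linarith
    have hstep : ∀ i < n, f (p i) - f (p (i + 1)) ≤ LL * (d / N) + τ / 2 * (d / N) ^ 2 := by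
      intro i hi
      have hdiff : p i - p (i + 1) = (-(1 / N)) • (y - x) := by
        rw [hp]
        push_cast
        match_scalars <;> field_simp <;> ring
      have hnd : ‖p i - p (i + 1)‖ = d / N := by
        rw [hdiff, norm_smul, Real.norm_eq_abs, abs_neg, abs_of_nonneg (by positivity),
          norm_sub_rev]
        rw [← hd]; ring
      have := hbase (p i) (hmem i hi.le) (p (i + 1)) (hmem (i + 1) hi)
      rw [hnd] at this
      exact this
    have htel := telescope_sub_le (fun i => f (p i)) n (LL * (d / N) + τ / 2 * (d / N) ^ 2) hstep
    have hp0 : p 0 = x := by simp [hp]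
    have hpn : p n = y := by
      rw [hp]
      simp only [← hNdef, div_self hN.ne', one_smul]
      abel
    simp only [hp0, hpn] at htel
    rw [← hNdef] at htel
    have hNC : N * (LL * (d / N) + τ / 2 * (d / N) ^ 2) = LL * d + (τ / 2 * d ^ 2) / N := by
      field_simp
    have h5 : (τ / 2 * d ^ 2) / N ≤ c / N := (div_le_div_iff_of_pos_right hN).2 (le_max_left _ _)
    have h6 : c / N < ε := (div_lt_iff₀ hN).2 (by nlinarith [(div_lt_iff₀ hε).1 hn])
    linarith
  constructor
  · -- weak convexity
    intro x _ y _ a b ha hb hab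
    simp only
    rcases ha.eq_or_lt with ha0 | ha0
    · have hb1 : b = 1 := by linarith
      subst hb1
      simp [← ha0]
    rcases hb.eq_or_lt with hb0 | hb0
    · have ha1 : a = 1 := by linarith
      subst ha1
      simp [← hb0]
    -- both coefficients positive
    have hmulbot : ∀ t : ℝ, 0 < t → ∀ g : EReal, g ≠ ⊥ → (t : EReal) * g ≠ ⊥ := by
      intro t ht g hg
      rcases eq_or_ne g ⊤ with h' | h'
      · rw [h', EReal.coe_mul_top_of_pos ht]; simp
      · rw [← EReal.coe_toReal h' hg, ← EReal.coe_mul]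
        exact EReal.coe_ne_bot _
    have hgbot : ∀ w : E, (f w : EReal) + r w + (((τ + η) / 2 * ‖w‖ ^ 2 : ℝ) : EReal) ≠ ⊥ := by
      intro w
      simp only [Ne, EReal.add_eq_bot_iff, not_or]
      exact ⟨⟨EReal.coe_ne_bot _, hrbot w⟩, EReal.coe_ne_bot _⟩
    by_cases hrx : r x = ⊤
    · have h1 : (a : EReal) * ((f x : EReal) + r x + (((τ + η) / 2 * ‖x‖ ^ 2 : ℝ) : EReal)) = ⊤ := by
        rw [hrx, EReal.coe_add_top, EReal.top_add_coe, EReal.coe_mul_top_of_pos ha0]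
      rw [h1, EReal.top_add_of_ne_bot (hmulbot b hb0 _ (hgbot y))]
      exact le_top
    by_cases hry : r y = ⊤
    · have h1 : (b : EReal) * ((f y : EReal) + r y + (((τ + η) / 2 * ‖y‖ ^ 2 : ℝ) : EReal)) = ⊤ := by
        rw [hry, EReal.coe_add_top, EReal.top_add_coe, EReal.coe_mul_top_of_pos hb0]
      rw [add_comm ((a:EReal) * _), h1, EReal.top_add_of_ne_bot (hmulbot a ha0 _ (hgbot x))]
      exact le_top
    -- main case
    have hX : x ∈ U := hUdom hrx
    have hY : y ∈ U := hUdom hry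
    set z : E := a • x + b • y with hzdef
    have hz : z ∈ U := hUconv hX hY ha hb hab
    have hx' : ((r x).toReal : EReal) = r x := EReal.coe_toReal hrx (hrbot x)
    have hy' : ((r y).toReal : EReal) = r y := EReal.coe_toReal hry (hrbot y)
    haveI : (ae P).NeBot := ae_neBot.2 (IsProbabilityMeasure.ne_zero P)
    have hrz : r z ≠ ⊤ := by
      intro hrz
      obtain ⟨ξ0, hξ0⟩ := (hB3 z hz).exists
      have hkey0 := hξ0 x hX y hY a b ha hb hab
      beta_reduce at hkey0
      rw [← hzdef, hrz, EReal.coe_add_top, EReal.top_add_coe, top_le_iff, ← hx', ← hy'] at hkey0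
      rw [show ((F z x ξ0 : EReal) + ((r x).toReal : EReal) + ((η / 2 * ‖x‖ ^ 2 : ℝ) : EReal))
          = ((F z x ξ0 + (r x).toReal + η / 2 * ‖x‖ ^ 2 : ℝ) : EReal) by push_cast; ring,
        show ((F z y ξ0 : EReal) + ((r y).toReal : EReal) + ((η / 2 * ‖y‖ ^ 2 : ℝ) : EReal))
          = ((F z y ξ0 + (r y).toReal + η / 2 * ‖y‖ ^ 2 : ℝ) : EReal) by push_cast; ring,
        ← EReal.coe_mul, ← EReal.coe_mul, ← EReal.coe_add] at hkey0
      exact EReal.coe_ne_top _ hkey0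
    have hz' : ((r z).toReal : EReal) = r z := EReal.coe_toReal hrz (hrbot z)
    -- almost-everywhere real inequality
    have hae : ∀ᵐ ξ ∂P, F z z ξ + (r z).toReal + η / 2 * ‖z‖ ^ 2
        ≤ a * (F z x ξ + (r x).toReal + η / 2 * ‖x‖ ^ 2)
          + b * (F z y ξ + (r y).toReal + η / 2 * ‖y‖ ^ 2) := by
      filter_upwards [hB3 z hz] with ξ hξ
      have hkey := hξ x hX y hY a b ha hb hab
      beta_reduce at hkey
      rw [← hzdef, ← hx', ← hy', ← hz'] at hkey
      exact_mod_cast hkey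
    have iz1 : Integrable (fun ξ => F z z ξ + (r z).toReal) P :=
      (hFint z hz z hz).add (integrable_const _)
    have iz2 : Integrable (fun ξ => F z z ξ + (r z).toReal + η / 2 * ‖z‖ ^ 2) P :=
      iz1.add (integrable_const _)
    have ix1 : Integrable (fun ξ => F z x ξ + (r x).toReal) P :=
      (hFint z hz x hX).add (integrable_const _)
    have ix2 : Integrable (fun ξ => F z x ξ + (r x).toReal + η / 2 * ‖x‖ ^ 2) P :=
      ix1.add (integrable_const _)
    have iy1 : Integrable (fun ξ => F z y ξ + (r y).toReal) P :=
      (hFint z hz y hY).add (integrable_const _)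
    have iy2 : Integrable (fun ξ => F z y ξ + (r y).toReal + η / 2 * ‖y‖ ^ 2) P :=
      iy1.add (integrable_const _)
    have ix3 : Integrable (fun ξ => a * (F z x ξ + (r x).toReal + η / 2 * ‖x‖ ^ 2)) P :=
      ix2.const_mul a
    have iy3 : Integrable (fun ξ => b * (F z y ξ + (r y).toReal + η / 2 * ‖y‖ ^ 2)) P :=
      iy2.const_mul b
    have irhs : Integrable (fun ξ => a * (F z x ξ + (r x).toReal + η / 2 * ‖x‖ ^ 2)
        + b * (F z y ξ + (r y).toReal + η / 2 * ‖y‖ ^ 2)) P := ix3.add iy3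
    have key := integral_mono_ae iz2 irhs hae
    have hl : ∫ ξ, (F z z ξ + (r z).toReal + η / 2 * ‖z‖ ^ 2) ∂P
        = f z + (r z).toReal + η / 2 * ‖z‖ ^ 2 := by
      rw [integral_add iz1 (integrable_const _), integral_add (hFint z hz z hz)
        (integrable_const _), hB2center z hz]
      simp
    have hrx' : ∫ ξ, (F z x ξ + (r x).toReal + η / 2 * ‖x‖ ^ 2) ∂P
        = (∫ ξ, F z x ξ ∂P) + (r x).toReal + η / 2 * ‖x‖ ^ 2 := by
      rw [integral_add ix1 (integrable_const _), integral_add (hFint z hz x hX)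
        (integrable_const _)]
      simp
    have hry' : ∫ ξ, (F z y ξ + (r y).toReal + η / 2 * ‖y‖ ^ 2) ∂P
        = (∫ ξ, F z y ξ ∂P) + (r y).toReal + η / 2 * ‖y‖ ^ 2 := by
      rw [integral_add iy1 (integrable_const _), integral_add (hFint z hz y hY)
        (integrable_const _)]
      simp
    have hrhs : ∫ ξ, (a * (F z x ξ + (r x).toReal + η / 2 * ‖x‖ ^ 2)
          + b * (F z y ξ + (r y).toReal + η / 2 * ‖y‖ ^ 2)) ∂P
        = a * ((∫ ξ, F z x ξ ∂P) + (r x).toReal + η / 2 * ‖x‖ ^ 2)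
          + b * ((∫ ξ, F z y ξ ∂P) + (r y).toReal + η / 2 * ‖y‖ ^ 2) := by
      rw [integral_add ix3 iy3, integral_const_mul, integral_const_mul, hrx', hry']
    rw [hl, hrhs] at key
    -- bounds on the integrals of the model
    set Ix : ℝ := ∫ ξ, F z x ξ ∂P with hIxdef
    set Iy : ℝ := ∫ ξ, F z y ξ ∂P with hIydef
    have ha' : a = 1 - b := by linarith
    have hIx : Ix ≤ f x + τ / 2 * (b ^ 2 * ‖x - y‖ ^ 2) := by
      have h := hB2acc z hz x hX
      rw [integral_sub (hFint z hz x hX) (integrable_const _), integral_const, probReal_univ,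
        one_smul] at h
      have hxz : x - z = b • (x - y) := by rw [hzdef, ha']; module
      have hn2 : ‖x - z‖ ^ 2 = b ^ 2 * ‖x - y‖ ^ 2 := by
        rw [hxz, norm_smul, Real.norm_eq_abs, abs_of_nonneg hb, mul_pow]
      rw [hn2] at h
      linarith
    have hIy : Iy ≤ f y + τ / 2 * (a ^ 2 * ‖x - y‖ ^ 2) := by
      have h := hB2acc z hz y hY
      rw [integral_sub (hFint z hz y hY) (integrable_const _), integral_const, probReal_univ,
        one_smul] at h
      have hyz : y - z = a • (y - x) := by rw [hzdef, ha']; module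
      have hn2 : ‖y - z‖ ^ 2 = a ^ 2 * ‖x - y‖ ^ 2 := by
        rw [hyz, norm_smul, Real.norm_eq_abs, abs_of_nonneg ha, norm_sub_rev, mul_pow]
      rw [hn2] at h
      linarith
    -- norm identity
    have e1 : ‖z‖ ^ 2 = a ^ 2 * ‖x‖ ^ 2 + 2 * (a * b) * (inner ℝ x y : ℝ) + b ^ 2 * ‖y‖ ^ 2 := by
      rw [hzdef, norm_add_sq_real, norm_smul, norm_smul, real_inner_smul_left,
        real_inner_smul_right, Real.norm_eq_abs, Real.norm_eq_abs,
        abs_of_nonneg ha, abs_of_nonneg hb]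
      ring
    have e2 : ‖x - y‖ ^ 2 = ‖x‖ ^ 2 - 2 * (inner ℝ x y : ℝ) + ‖y‖ ^ 2 := norm_sub_sq_real x y
    have hz2t : τ / 2 * ‖z‖ ^ 2
        = τ / 2 * (a * ‖x‖ ^ 2) + τ / 2 * (b * ‖y‖ ^ 2) - τ / 2 * (a * b * ‖x - y‖ ^ 2) := by
      rw [e1, e2, ha']; ring
    have h3' : τ / 2 * (a * (b ^ 2 * ‖x - y‖ ^ 2)) + τ / 2 * (b * (a ^ 2 * ‖x - y‖ ^ 2))
        = τ / 2 * (a * b * ‖x - y‖ ^ 2) := by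
      rw [ha']; ring
    have h1 : a * Ix ≤ a * (f x + τ / 2 * (b ^ 2 * ‖x - y‖ ^ 2)) :=
      mul_le_mul_of_nonneg_left hIx ha
    have h2 : b * Iy ≤ b * (f y + τ / 2 * (a ^ 2 * ‖x - y‖ ^ 2)) :=
      mul_le_mul_of_nonneg_left hIy hb
    have hz2e : η / 2 * ‖z‖ ^ 2
        = η / 2 * (a * ‖x‖ ^ 2) + η / 2 * (b * ‖y‖ ^ 2) - η / 2 * (a * b * ‖x - y‖ ^ 2) := by
      rw [e1, e2, ha']; ring
    have hfinal : f z + (r z).toReal + (τ + η) / 2 * ‖z‖ ^ 2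
        ≤ a * (f x + (r x).toReal + (τ + η) / 2 * ‖x‖ ^ 2)
          + b * (f y + (r y).toReal + (τ + η) / 2 * ‖y‖ ^ 2) := by
      linarith [key, h1, h2, hz2t, h3', hz2e]
    rw [← hx', ← hy', ← hz']
    exact_mod_cast hfinal
  · intro x hx y hy
    rw [abs_sub_le_iff]
    refine ⟨hone x hx y hy, ?_⟩
    rw [norm_sub_rev]
    exact hone y hy x hx
end
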